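/- Let U ⊆ ℝ^{4r} be open, g a smooth field of invertible symmetric matrices on U with Levi-Civita coefficients γ_{XY}^Z, and T_{XY}^Z a smooth tensor field on U antisymmetric in X, Y (a torsion). Set Γ^+_{XY}^Z := γ_{XY}^Z + T_{XY}^Z, with covariant derivative 𝔇^+. Let J^α (α = 1,2,3) be an almost hypercomplex structure on U with vanishing diagonal Nijenhuis tensor, which is covariantly constant with respect to Γ^+: ∂_X J^α_Y^Z − Γ^+_{XY}^W J^α_W^Z + Γ^+_{XW}^Z J^α_Y^W = 0. Assume that the torsion is covariantly constant with respect to 𝔇^+ and traceless (Σ_Z T_{XZ}^Z = 0). Then the antisymmetric part of the Ricci tensor of the Obata connection Γ^{Ob} of J, namely R_{[XY]} := (1/2)(R_{XY} − R_{YX}) with R_{XY} := Σ_Z R^{Ob}_{ZXY}^Z, is given by R_{[XY]} = (2/3) Σ_Z T_{XY}^Z V_Z, where V_Z := Σ_{α,W,V,U} J^α_Z^W T_{WV}^U J^α_U^V. (This is the formula from which the non-vanishing antisymmetric Ricci tensor of hypercomplex group manifolds is computed.) -/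

import Mathlib

noncomputable section

/-- The Levi-Civita symbol on `Fin 3`, with `ε 0 1 2 = 1`. -/
def epsLC (a b c : Fin 3) : ℝ :=
  if (a, b, c) = ((0 : Fin 3), (1 : Fin 3), (2 : Fin 3)) ∨ (a, b, c) = (1, 2, 0) ∨ (a, b, c) = (2, 0, 1) then 1
  else if (a, b, c) = (2, 1, 0) ∨ (a, b, c) = (0, 2, 1) ∨ (a, b, c) = (1, 0, 2) then -1
  else 0

/-- Partial derivative `∂_i f` of a scalar function on `ℝ^n`. -/
def pd {n : ℕ} (i : Fin n) (f : (Fin n → ℝ) → ℝ) (x : Fin n → ℝ) : ℝ :=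
  fderiv ℝ f x (Pi.single i 1)

/-- The diagonal Nijenhuis tensor `N_{XY}^Z` of a triple of (1,1)-tensor fields. -/
def nijenhuis {n : ℕ} (J : Fin 3 → Fin n → Fin n → (Fin n → ℝ) → ℝ)
    (X Y Z : Fin n) (x : Fin n → ℝ) : ℝ :=
  (1 / 12) * ∑ α, ∑ W,
    (J α X W x * (pd W (J α Y Z) x - pd Y (J α W Z) x)
      - J α Y W x * (pd W (J α X Z) x - pd X (J α W Z) x))

/-- The Obata connection `Γ^{Ob}_{XY}^Z` of a triple of (1,1)-tensor fields. -/
def obata {n : ℕ} (J : Fin 3 → Fin n → Fin n → (Fin n → ℝ) → ℝ)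
    (X Y Z : Fin n) (x : Fin n → ℝ) : ℝ :=
  -(1 / 6) * ∑ α, ∑ W,
    ((pd X (J α Y W) x + pd Y (J α X W) x
        + (1 / 2) * ∑ β, ∑ γ, epsLC α β γ *
            ((∑ u, J β X u x * pd u (J γ Y W) x) + ∑ u, J β Y u x * pd u (J γ X W) x))
      * J α W Z x)

/-- An almost hypercomplex structure on an open set `U ⊆ ℝ^n`: a smooth family of three
(1,1)-tensor fields forming at every point of `U` a quaternionic triple. -/
def IsAlmostHypercomplexOn {n : ℕ} (J : Fin 3 → Fin n → Fin n → (Fin n → ℝ) → ℝ)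
    (U : Set (Fin n → ℝ)) : Prop :=
  (∀ α X Y, ContDiffOn ℝ (⊤ : ℕ∞) (J α X Y) U) ∧
  ∀ α β X Z, ∀ x ∈ U, ∑ W, J α X W x * J β W Z x =
    (if α = β then (-1 : ℝ) else 0) * (if X = Z then 1 else 0)
      + ∑ γ, epsLC α β γ * J γ X Z x

/-- The Levi-Civita (Christoffel) coefficients
`γ_{XY}^Z = (1/2) g^{ZV} (∂_X g_{YV} + ∂_Y g_{XV} − ∂_V g_{XY})` of a metric field `g`. -/
def christoffel {n : ℕ} (g : (Fin n → ℝ) → Matrix (Fin n) (Fin n) ℝ)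
    (X Y Z : Fin n) (x : Fin n → ℝ) : ℝ :=
  (1 / 2) * ∑ V, (g x)⁻¹ Z V *
    (pd X (fun y => g y Y V) x + pd Y (fun y => g y X V) x - pd V (fun y => g y X Y) x)

/-- The curvature
`R_{XYZ}^W = ∂_X Γ_{YZ}^W − ∂_Y Γ_{XZ}^W + Γ_{XV}^W Γ_{YZ}^V − Γ_{YV}^W Γ_{XZ}^V`
of connection coefficients `Γ`. -/
def curvOf {n : ℕ} (Γ : Fin n → Fin n → Fin n → (Fin n → ℝ) → ℝ)
    (X Y Z W : Fin n) (x : Fin n → ℝ) : ℝ :=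
  pd X (Γ Y Z W) x - pd Y (Γ X Z W) x
    + ∑ V, Γ X V W x * Γ Y Z V x - ∑ V, Γ Y V W x * Γ X Z V x

/-- The Ricci tensor `R_{XY} = Σ_Z R_{ZXY}^Z` of the Obata connection of `J`. -/
def obataRicci {n : ℕ} (J : Fin 3 → Fin n → Fin n → (Fin n → ℝ) → ℝ)
    (X Y : Fin n) (x : Fin n → ℝ) : ℝ :=
  ∑ Z, curvOf (fun A B C => obata J A B C) Z X Y Z x

set_option maxHeartbeats 2000000
set_option linter.unusedSectionVars false

section AUX

variable {n : ℕ} {U : Set (Fin n → ℝ)} {x : Fin n → ℝ}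

lemma cdo_diffAt {F : Type*} [NormedAddCommGroup F] [NormedSpace ℝ F]
    {f : (Fin n → ℝ) → F} (hf : ContDiffOn ℝ (⊤:ℕ∞) f U) (hU : IsOpen U)
    (hx : x ∈ U) : DifferentiableAt ℝ f x :=
  ((hf x hx).contDiffAt (hU.mem_nhds hx)).differentiableAt (by norm_num)

lemma pd_congr_nhds {f f' : (Fin n → ℝ) → ℝ} (h : f =ᶠ[nhds x] f') (i : Fin n) :
    pd i f x = pd i f' x := by
  unfold pd; rw [Filter.EventuallyEq.fderiv_eq h]

lemma pd_congr {f f' : (Fin n → ℝ) → ℝ} (hU : IsOpen U) (hx : x ∈ U)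
    (h : ∀ y ∈ U, f y = f' y) (i : Fin n) : pd i f x = pd i f' x :=
  pd_congr_nhds (Filter.eventuallyEq_of_mem (hU.mem_nhds hx) h) i

lemma pd_add {f g : (Fin n → ℝ) → ℝ} (hf : DifferentiableAt ℝ f x)
    (hg : DifferentiableAt ℝ g x) (i : Fin n) :
    pd i (fun y => f y + g y) x = pd i f x + pd i g x := by
  unfold pd; rw [fderiv_fun_add hf hg]; rfl

lemma pd_sub {f g : (Fin n → ℝ) → ℝ} (hf : DifferentiableAt ℝ f x)
    (hg : DifferentiableAt ℝ g x) (i : Fin n) :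
    pd i (fun y => f y - g y) x = pd i f x - pd i g x := by
  unfold pd; rw [fderiv_fun_sub hf hg]; rfl

lemma pd_mul {f g : (Fin n → ℝ) → ℝ} (hf : DifferentiableAt ℝ f x)
    (hg : DifferentiableAt ℝ g x) (i : Fin n) :
    pd i (fun y => f y * g y) x = pd i f x * g x + f x * pd i g x := by
  unfold pd; rw [fderiv_fun_mul hf hg]; simp; ring

lemma pd_const (c : ℝ) (i : Fin n) : pd i (fun _ => c) x = 0 := by
  unfold pd; simp

lemma pd_const_mul {f : (Fin n → ℝ) → ℝ} (hf : DifferentiableAt ℝ f x) (c : ℝ) (i : Fin n) :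
    pd i (fun y => c * f y) x = c * pd i f x := by
  unfold pd; rw [fderiv_const_mul hf]; simp

lemma pd_sum {ι : Type*} {s : Finset ι} {f : ι → (Fin n → ℝ) → ℝ}
    (hf : ∀ j ∈ s, DifferentiableAt ℝ (f j) x) (i : Fin n) :
    pd i (fun y => ∑ j ∈ s, f j y) x = ∑ j ∈ s, pd i (f j) x := by
  unfold pd
  rw [fderiv_fun_sum hf]
  simp

lemma diffAt_sum {ι : Type*} {s : Finset ι} {f : ι → (Fin n → ℝ) → ℝ}
    (hf : ∀ j ∈ s, DifferentiableAt ℝ (f j) x) :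
    DifferentiableAt ℝ (fun y => ∑ j ∈ s, f j y) x :=
  DifferentiableAt.fun_sum hf

lemma cdo_pd {f : (Fin n → ℝ) → ℝ} (hf : ContDiffOn ℝ (⊤:ℕ∞) f U) (hU : IsOpen U)
    (i : Fin n) : ContDiffOn ℝ (⊤:ℕ∞) (pd i f) U := by
  have h1 : ContDiffOn ℝ (⊤:ℕ∞) (fderiv ℝ f) U := hf.fderiv_of_isOpen hU (by norm_num)
  have : pd i f = fun y => (fderiv ℝ f y) (Pi.single i 1) := rfl
  rw [this]
  exact h1.clm_apply contDiffOn_const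

lemma pd_swap {f : (Fin n → ℝ) → ℝ} (hf : ContDiffOn ℝ (⊤:ℕ∞) f U) (hU : IsOpen U)
    (hx : x ∈ U) (i j : Fin n) : pd i (pd j f) x = pd j (pd i f) x := by
  have hsym : IsSymmSndFDerivAt ℝ f x := by
    have : ContDiffAt ℝ (⊤:ℕ∞) f x := (hf x hx).contDiffAt (hU.mem_nhds hx)
    refine this.isSymmSndFDerivAt ?_
    rw [show ((2:WithTop ℕ∞)) = ((2:ℕ∞):WithTop ℕ∞) from rfl]
    rw [minSmoothness_of_isRCLikeNormedField]; exact_mod_cast le_top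
  have hd : DifferentiableAt ℝ (fderiv ℝ f) x := by
    have h1 : ContDiffOn ℝ (⊤:ℕ∞) (fderiv ℝ f) U := hf.fderiv_of_isOpen hU (by norm_num)
    exact cdo_diffAt h1 hU hx
  have key : ∀ a b : Fin n, pd a (pd b f) x
      = fderiv ℝ (fderiv ℝ f) x (Pi.single a 1) (Pi.single b 1) := by
    intro a b
    have : pd b f = fun y => (fderiv ℝ f y) (Pi.single b 1) := rfl
    rw [show pd a (pd b f) x = fderiv ℝ (fun y => (fderiv ℝ f y) (Pi.single b 1)) x (Pi.single a 1) from rfl]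
    rw [fderiv_clm_apply hd (differentiableAt_const _)]
    simp
  rw [key i j, key j i, hsym (Pi.single i 1) (Pi.single j 1)]



variable {n : ℕ} {U : Set (Fin n → ℝ)}

lemma cdo_prod {ι : Type*} [DecidableEq ι] {s : Finset ι} {f : ι → (Fin n → ℝ) → ℝ}
    (hf : ∀ j ∈ s, ContDiffOn ℝ (⊤:ℕ∞) (f j) U) :
    ContDiffOn ℝ (⊤:ℕ∞) (fun y => ∏ j ∈ s, f j y) U := by
  classical
  induction s using Finset.induction with
  | empty => simpa using contDiffOn_const
  | insert a s hj ih =>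
    simp only [Finset.prod_insert hj]
    exact (hf a (Finset.mem_insert_self a s)).mul
      (ih fun j hjs => hf j (Finset.mem_insert_of_mem hjs))

lemma cdo_det {M : (Fin n → ℝ) → Matrix (Fin n) (Fin n) ℝ}
    (hM : ∀ i j, ContDiffOn ℝ (⊤:ℕ∞) (fun y => M y i j) U) :
    ContDiffOn ℝ (⊤:ℕ∞) (fun y => (M y).det) U := by
  have : (fun y => (M y).det)
      = fun y => ∑ σ : Equiv.Perm (Fin n), (Equiv.Perm.sign σ : ℤ) * ∏ i, M y (σ i) i := by
    funext y; rw [Matrix.det_apply]; congr 1; funext σ; rw [Units.smul_def, zsmul_eq_mul]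
  rw [this]
  refine ContDiffOn.sum fun σ _ => ContDiffOn.mul contDiffOn_const ?_
  exact cdo_prod fun i _ => hM (σ i) i

lemma cdo_inv_entry {g : (Fin n → ℝ) → Matrix (Fin n) (Fin n) ℝ}
    (hg : ∀ i j, ContDiffOn ℝ (⊤:ℕ∞) (fun y => g y i j) U)
    (hdet : ∀ x ∈ U, IsUnit (g x).det) (Z V : Fin n) :
    ContDiffOn ℝ (⊤:ℕ∞) (fun y => (g y)⁻¹ Z V) U := by
  have hadj : ContDiffOn ℝ (⊤:ℕ∞) (fun y => (g y).adjugate Z V) U := by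
    have : (fun y => (g y).adjugate Z V)
        = fun y => ((g y).updateRow V (Pi.single Z 1)).det := by
      funext y; rw [Matrix.adjugate_apply]
    rw [this]
    refine cdo_det fun i j => ?_
    have : (fun y => (g y).updateRow V (Pi.single Z 1) i j)
        = fun y => if i = V then (Pi.single Z (1:ℝ) : Fin n → ℝ) j else g y i j := by
      funext y; rw [Matrix.updateRow_apply]
    rw [this]
    by_cases h : i = V <;> simp only [h, if_true, if_false, if_neg] <;>
      first
        | exact contDiffOn_const
        | exact hg i j
  have hdet' : ContDiffOn ℝ (⊤:ℕ∞) (fun y => ((g y).det)⁻¹) U :=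
    (cdo_det hg).inv (fun x hx => (hdet x hx).ne_zero)
  have : (fun y => (g y)⁻¹ Z V) = fun y => ((g y).det)⁻¹ * (g y).adjugate Z V := by
    funext y
    rw [Matrix.inv_def]
    simp [Ring.inverse_eq_inv']
  rw [this]
  exact hdet'.mul hadj


section keys
variable {m : ℕ} (j : Fin 3 → Fin m → Fin m → ℝ)
variable (hQ : ∀ α β a b, ∑ W, j α a W * j β W b
    = (if α = β then (-1:ℝ) else 0) * (if a = b then 1 else 0) + ∑ γ, epsLC α β γ * j γ a b)

include hQ

lemma key0 (α : Fin 3) (a b : Fin m) :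
    ∑ W, j α a W * j α W b = -(if a = b then (1:ℝ) else 0) := by
  rw [hQ]
  have : ∀ γ, epsLC α α γ * j γ a b = 0 := by
    intro γ; fin_cases α <;> fin_cases γ <;>
      simp (config := {decide := true}) [epsLC]
  rw [Finset.sum_congr rfl fun γ _ => this γ]
  simp
  split <;> norm_num

lemma key1 (β : Fin 3) (V Z : Fin m) :
    ∑ α, ∑ γ, epsLC α β γ * (∑ W, j γ V W * j α W Z) = 2 * j β V Z := by
  have h : ∀ α γ : Fin 3, (∑ W, j γ V W * j α W Z)
      = (if γ = α then (-1:ℝ) else 0) * (if V = Z then 1 else 0)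
        + ∑ δ, epsLC γ α δ * j δ V Z := fun α γ => hQ γ α V Z
  calc ∑ α, ∑ γ, epsLC α β γ * (∑ W, j γ V W * j α W Z)
      = ∑ α, ∑ γ, epsLC α β γ * ((if γ = α then (-1:ℝ) else 0) * (if V = Z then 1 else 0)
          + ∑ δ, epsLC γ α δ * j δ V Z) :=
        Finset.sum_congr rfl fun α _ => Finset.sum_congr rfl fun γ _ => by rw [h]
    _ = 2 * j β V Z := by
        fin_cases β <;>
          simp (config := {decide := true}) [Fin.sum_univ_three, epsLC] <;> ring

lemma key2 (β : Fin 3) (W V : Fin m) :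
    ∑ α, ∑ γ, epsLC α β γ * (∑ Z, j α W Z * j γ Z V) = -2 * j β W V := by
  have h : ∀ α γ : Fin 3, (∑ Z, j α W Z * j γ Z V)
      = (if α = γ then (-1:ℝ) else 0) * (if W = V then 1 else 0)
        + ∑ δ, epsLC α γ δ * j δ W V := fun α γ => hQ α γ W V
  calc ∑ α, ∑ γ, epsLC α β γ * (∑ Z, j α W Z * j γ Z V)
      = ∑ α, ∑ γ, epsLC α β γ * ((if α = γ then (-1:ℝ) else 0) * (if W = V then 1 else 0)
          + ∑ δ, epsLC α γ δ * j δ W V) :=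
        Finset.sum_congr rfl fun α _ => Finset.sum_congr rfl fun γ _ => by rw [h]
    _ = -2 * j β W V := by
        fin_cases β <;>
          simp (config := {decide := true}) [Fin.sum_univ_three, epsLC] <;> ring

lemma key3 (γ : Fin 3) (W u : Fin m) :
    ∑ α, ∑ β, epsLC α β γ * (∑ Z, j α W Z * j β Z u) = 2 * j γ W u := by
  have h : ∀ α β : Fin 3, (∑ Z, j α W Z * j β Z u)
      = (if α = β then (-1:ℝ) else 0) * (if W = u then 1 else 0)
        + ∑ δ, epsLC α β δ * j δ W u := fun α β => hQ α β W u
  calc ∑ α, ∑ β, epsLC α β γ * (∑ Z, j α W Z * j β Z u)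
      = ∑ α, ∑ β, epsLC α β γ * ((if α = β then (-1:ℝ) else 0) * (if W = u then 1 else 0)
          + ∑ δ, epsLC α β δ * j δ W u) :=
        Finset.sum_congr rfl fun α _ => Finset.sum_congr rfl fun β _ => by rw [h]
    _ = 2 * j γ W u := by
        fin_cases γ <;>
          simp (config := {decide := true}) [Fin.sum_univ_three, epsLC] <;> ring

end keys

section sums
variable {κ κ₁ κ₂ κ₃ κ₄ κ₅ κ₆ : Type*} [Fintype κ] [Fintype κ₁] [Fintype κ₂] [Fintype κ₃]
  [Fintype κ₄] [Fintype κ₅] [Fintype κ₆] [DecidableEq κ]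

lemma scongr {f g : κ₁ → ℝ} (h : ∀ w, f w = g w) :
    ∑ w, f w = ∑ w, g w := Finset.sum_congr rfl fun w _ => h w

lemma sum_factor (c : ℝ) {f g : κ₁ → ℝ}
    (h : ∀ w, f w = c * g w) : ∑ w, f w = c * ∑ w, g w := by
  rw [Finset.mul_sum]; exact Finset.sum_congr rfl fun w _ => h w

lemma pull3 (f : κ₁ → κ₂ → κ₃ → ℝ) :
    ∑ a, ∑ b, ∑ c, f a b c = ∑ c, ∑ a, ∑ b, f a b c := by
  calc ∑ a, ∑ b, ∑ c, f a b c = ∑ a, ∑ c, ∑ b, f a b c :=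
        scongr fun a => Finset.sum_comm
    _ = ∑ c, ∑ a, ∑ b, f a b c := Finset.sum_comm

lemma pull4 (f : κ₁ → κ₂ → κ₃ → κ₄ → ℝ) :
    ∑ a, ∑ b, ∑ c, ∑ d, f a b c d = ∑ d, ∑ a, ∑ b, ∑ c, f a b c d := by
  calc ∑ a, ∑ b, ∑ c, ∑ d, f a b c d = ∑ a, ∑ d, ∑ b, ∑ c, f a b c d :=
        scongr fun a => pull3 _
    _ = ∑ d, ∑ a, ∑ b, ∑ c, f a b c d := Finset.sum_comm

lemma pull5 (f : κ₁ → κ₂ → κ₃ → κ₄ → κ₅ → ℝ) :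
    ∑ a, ∑ b, ∑ c, ∑ d, ∑ e, f a b c d e = ∑ e, ∑ a, ∑ b, ∑ c, ∑ d, f a b c d e := by
  calc ∑ a, ∑ b, ∑ c, ∑ d, ∑ e, f a b c d e = ∑ a, ∑ e, ∑ b, ∑ c, ∑ d, f a b c d e :=
        scongr fun a => pull4 _
    _ = ∑ e, ∑ a, ∑ b, ∑ c, ∑ d, f a b c d e := Finset.sum_comm

lemma pull6 (f : κ₁ → κ₂ → κ₃ → κ₄ → κ₅ → κ₆ → ℝ) :
    ∑ a, ∑ b, ∑ c, ∑ d, ∑ e, ∑ i, f a b c d e i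
      = ∑ i, ∑ a, ∑ b, ∑ c, ∑ d, ∑ e, f a b c d e i := by
  calc ∑ a, ∑ b, ∑ c, ∑ d, ∑ e, ∑ i, f a b c d e i
      = ∑ a, ∑ i, ∑ b, ∑ c, ∑ d, ∑ e, f a b c d e i := scongr fun a => pull5 _
    _ = ∑ i, ∑ a, ∑ b, ∑ c, ∑ d, ∑ e, f a b c d e i := Finset.sum_comm

lemma push3 (f : κ₁ → κ₂ → κ₃ → ℝ) :
    ∑ a, ∑ b, ∑ c, f a b c = ∑ b, ∑ c, ∑ a, f a b c := by
  calc ∑ a, ∑ b, ∑ c, f a b c = ∑ b, ∑ a, ∑ c, f a b c := Finset.sum_comm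
    _ = ∑ b, ∑ c, ∑ a, f a b c := scongr fun b => Finset.sum_comm

lemma push4 (f : κ₁ → κ₂ → κ₃ → κ₄ → ℝ) :
    ∑ a, ∑ b, ∑ c, ∑ d, f a b c d = ∑ b, ∑ c, ∑ d, ∑ a, f a b c d := by
  calc ∑ a, ∑ b, ∑ c, ∑ d, f a b c d = ∑ b, ∑ a, ∑ c, ∑ d, f a b c d := Finset.sum_comm
    _ = ∑ b, ∑ c, ∑ d, ∑ a, f a b c d := scongr fun b => push3 _

lemma sum_delta (f : κ → ℝ) (a : κ) :
    ∑ v, f v * (if v = a then (1:ℝ) else 0) = f a := by simp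

lemma sum_delta' (f : κ → ℝ) (a : κ) :
    ∑ v, f v * (if a = v then (1:ℝ) else 0) = f a := by simp

lemma sum3_const (c : ℝ) : ∑ _α : Fin 3, c = 3 * c := by
  simp [Finset.sum_const]

lemma ite_eq_swap (V W : κ) : (if W = V then (1:ℝ) else 0) = if V = W then (1:ℝ) else 0 := by
  rcases eq_or_ne V W with h|h
  · subst h; rfl
  · rw [if_neg h, if_neg fun hh => h hh.symm]

end sums

section trace
variable {m : ℕ} (j : Fin 3 → Fin m → Fin m → ℝ)
  (Γv : Fin m → Fin m → Fin m → ℝ) (D : Fin m → Fin 3 → Fin m → Fin m → ℝ)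
variable (hD : ∀ A (α : Fin 3) B C, D A α B C
    = (∑ V, Γv A B V * j α V C) - ∑ V, Γv A V C * j α B V)
variable (hQ : ∀ α β a b, ∑ W, j α a W * j β W b
    = (if α = β then (-1:ℝ) else 0) * (if a = b then 1 else 0) + ∑ γ, epsLC α β γ * j γ a b)

include hD hQ

lemma hP1 (X : Fin m) : (∑ Z, ∑ α, ∑ W, D X α Z W * j α W Z) = 0 := by
  have e : ∀ Z (α : Fin 3) W, D X α Z W * j α W Z
      = (∑ V, Γv X Z V * (j α V W * j α W Z)) - ∑ V, Γv X V W * (j α Z V * j α W Z) := by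
    intro Z α W; rw [hD, sub_mul, Finset.sum_mul, Finset.sum_mul]
    congr 1 <;> exact scongr fun V => by ring
  have a1 : (∑ Z, ∑ α, ∑ W, ∑ V, Γv X Z V * (j α V W * j α W Z))
      = -3 * ∑ Z, Γv X Z Z := by
    calc (∑ Z, ∑ α, ∑ W, ∑ V, Γv X Z V * (j α V W * j α W Z))
        = ∑ Z, ∑ α, ∑ V, ∑ W, Γv X Z V * (j α V W * j α W Z) :=
          scongr fun Z => scongr fun α => Finset.sum_comm
      _ = ∑ Z, ∑ α, ∑ V, Γv X Z V * -(if V = Z then (1:ℝ) else 0) :=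
          scongr fun Z => scongr fun α => scongr fun V => by
            rw [← Finset.mul_sum, key0 j hQ]
      _ = ∑ Z, ∑ α, ∑ V, -(Γv X Z V) * (if V = Z then (1:ℝ) else 0) :=
          scongr fun Z => scongr fun α => scongr fun V => by ring
      _ = ∑ Z, ∑ _α : Fin 3, -(Γv X Z Z) :=
          scongr fun Z => scongr fun α => sum_delta _ Z
      _ = ∑ Z, (3:ℝ) * -(Γv X Z Z) := scongr fun Z => sum3_const _
      _ = -3 * ∑ Z, Γv X Z Z := by
          rw [Finset.mul_sum]; exact scongr fun Z => by ring
  have a2 : (∑ Z, ∑ α, ∑ W, ∑ V, Γv X V W * (j α Z V * j α W Z))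
      = -3 * ∑ Z, Γv X Z Z := by
    calc (∑ Z, ∑ α, ∑ W, ∑ V, Γv X V W * (j α Z V * j α W Z))
        = ∑ α, ∑ W, ∑ V, ∑ Z, Γv X V W * (j α Z V * j α W Z) := push4 _
      _ = ∑ α, ∑ W, ∑ V, Γv X V W * -(if W = V then (1:ℝ) else 0) :=
          scongr fun α => scongr fun W => scongr fun V => by
            have : ∀ Z, Γv X V W * (j α Z V * j α W Z) = Γv X V W * (j α W Z * j α Z V) :=
              fun Z => by ring
            rw [scongr this, ← Finset.mul_sum, key0 j hQ]
      _ = ∑ α, ∑ W, ∑ V, -(Γv X V W) * (if W = V then (1:ℝ) else 0) :=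
          scongr fun α => scongr fun W => scongr fun V => by ring
      _ = ∑ α, ∑ W, ∑ V, -(Γv X V W) * (if V = W then (1:ℝ) else 0) :=
          scongr fun α => scongr fun W => scongr fun V => by
            rw [ite_eq_swap]
      _ = ∑ _α : Fin 3, ∑ W, -(Γv X W W) :=
          scongr fun α => scongr fun W => sum_delta _ W
      _ = (3:ℝ) * ∑ W, -(Γv X W W) := sum3_const _
      _ = -3 * ∑ Z, Γv X Z Z := by
          rw [Finset.mul_sum, Finset.mul_sum]; exact scongr fun Z => by ring
  calc (∑ Z, ∑ α, ∑ W, D X α Z W * j α W Z)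
      = ∑ Z, ∑ α, ∑ W, ((∑ V, Γv X Z V * (j α V W * j α W Z))
          - ∑ V, Γv X V W * (j α Z V * j α W Z)) :=
        scongr fun Z => scongr fun α => scongr fun W => e Z α W
    _ = (∑ Z, ∑ α, ∑ W, ∑ V, Γv X Z V * (j α V W * j α W Z))
          - ∑ Z, ∑ α, ∑ W, ∑ V, Γv X V W * (j α Z V * j α W Z) := by
        simp only [Finset.sum_sub_distrib]
    _ = 0 := by rw [a1, a2]; ring

end trace

section trace2
variable {m : ℕ} (j : Fin 3 → Fin m → Fin m → ℝ)
  (Γv : Fin m → Fin m → Fin m → ℝ) (D : Fin m → Fin 3 → Fin m → Fin m → ℝ)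
variable (hD : ∀ A (α : Fin 3) B C, D A α B C
    = (∑ V, Γv A B V * j α V C) - ∑ V, Γv A V C * j α B V)
variable (hQ : ∀ α β a b, ∑ W, j α a W * j β W b
    = (if α = β then (-1:ℝ) else 0) * (if a = b then 1 else 0) + ∑ γ, epsLC α β γ * j γ a b)

include hD hQ

lemma hP2 (X : Fin m) : (∑ Z, ∑ α, ∑ W, D Z α X W * j α W Z)
    = (-3 * ∑ Z, Γv Z X Z) - ∑ β, ∑ u, ∑ z, ∑ v, j β X u * Γv z u v * j β v z := by
  have e : ∀ Z (α : Fin 3) W, D Z α X W * j α W Z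
      = (∑ V, Γv Z X V * (j α V W * j α W Z)) - ∑ V, Γv Z V W * (j α X V * j α W Z) := by
    intro Z α W; rw [hD, sub_mul, Finset.sum_mul, Finset.sum_mul]
    congr 1 <;> exact scongr fun V => by ring
  have b1 : (∑ Z, ∑ α, ∑ W, ∑ V, Γv Z X V * (j α V W * j α W Z))
      = -3 * ∑ Z, Γv Z X Z := by
    calc (∑ Z, ∑ α, ∑ W, ∑ V, Γv Z X V * (j α V W * j α W Z))
        = ∑ Z, ∑ α, ∑ V, ∑ W, Γv Z X V * (j α V W * j α W Z) :=
          scongr fun Z => scongr fun α => Finset.sum_comm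
      _ = ∑ Z, ∑ α, ∑ V, Γv Z X V * -(if V = Z then (1:ℝ) else 0) :=
          scongr fun Z => scongr fun α => scongr fun V => by
            rw [← Finset.mul_sum, key0 j hQ]
      _ = ∑ Z, ∑ α, ∑ V, -(Γv Z X V) * (if V = Z then (1:ℝ) else 0) :=
          scongr fun Z => scongr fun α => scongr fun V => by ring
      _ = ∑ Z, ∑ _α : Fin 3, -(Γv Z X Z) :=
          scongr fun Z => scongr fun α => sum_delta _ Z
      _ = ∑ Z, (3:ℝ) * -(Γv Z X Z) := scongr fun Z => sum3_const _
      _ = -3 * ∑ Z, Γv Z X Z := by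
          rw [Finset.mul_sum]; exact scongr fun Z => by ring
  have b2 : (∑ Z, ∑ α, ∑ W, ∑ V, Γv Z V W * (j α X V * j α W Z))
      = ∑ β, ∑ u, ∑ z, ∑ v, j β X u * Γv z u v * j β v z := by
    calc (∑ Z, ∑ α, ∑ W, ∑ V, Γv Z V W * (j α X V * j α W Z))
        = ∑ α, ∑ W, ∑ V, ∑ Z, Γv Z V W * (j α X V * j α W Z) := push4 _
      _ = ∑ α, ∑ V, ∑ Z, ∑ W, Γv Z V W * (j α X V * j α W Z) :=
          scongr fun α => push3 _
      _ = ∑ β, ∑ u, ∑ z, ∑ v, j β X u * Γv z u v * j β v z :=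
          scongr fun α => scongr fun V => scongr fun Z => scongr fun W => by ring
  calc (∑ Z, ∑ α, ∑ W, D Z α X W * j α W Z)
      = ∑ Z, ∑ α, ∑ W, ((∑ V, Γv Z X V * (j α V W * j α W Z))
          - ∑ V, Γv Z V W * (j α X V * j α W Z)) :=
        scongr fun Z => scongr fun α => scongr fun W => e Z α W
    _ = (∑ Z, ∑ α, ∑ W, ∑ V, Γv Z X V * (j α V W * j α W Z))
          - ∑ Z, ∑ α, ∑ W, ∑ V, Γv Z V W * (j α X V * j α W Z) := by
        simp only [Finset.sum_sub_distrib]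
    _ = (-3 * ∑ Z, Γv Z X Z) - ∑ β, ∑ u, ∑ z, ∑ v, j β X u * Γv z u v * j β v z := by
        rw [b1, b2]

lemma hP3 (X : Fin m) :
    (∑ Z, ∑ α, ∑ W, ∑ β, ∑ γ, epsLC α β γ * ((∑ u, j β X u * D u γ Z W) * j α W Z))
    = 4 * ∑ β, ∑ u, ∑ z, ∑ v, j β X u * Γv u z v * j β v z := by
  have e3 : ∀ Z (α : Fin 3) W (β γ : Fin 3),
      epsLC α β γ * ((∑ u, j β X u * D u γ Z W) * j α W Z)
      = (∑ u, ∑ V, epsLC α β γ * (j β X u * Γv u Z V * (j γ V W * j α W Z)))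
        - ∑ u, ∑ V, epsLC α β γ * (j β X u * Γv u V W * (j γ Z V * j α W Z)) := by
    intro Z α W β γ
    simp only [hD]
    simp only [mul_sub, sub_mul, Finset.mul_sum, Finset.sum_mul, Finset.sum_sub_distrib]
    congr 1 <;> exact scongr fun u => scongr fun V => by ring
  have f1 : ∀ (β : Fin 3) (u Z V : Fin m),
      (∑ α, ∑ γ, ∑ W, epsLC α β γ * (j β X u * Γv u Z V * (j γ V W * j α W Z)))
      = j β X u * Γv u Z V * (2 * j β V Z) := by
    intro β u Z V
    calc (∑ α, ∑ γ, ∑ W, epsLC α β γ * (j β X u * Γv u Z V * (j γ V W * j α W Z)))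
        = (j β X u * Γv u Z V) * ∑ α, ∑ γ, epsLC α β γ * (∑ W, j γ V W * j α W Z) := by
          refine sum_factor _ fun α => ?_
          refine sum_factor _ fun γ => ?_
          calc (∑ W, epsLC α β γ * (j β X u * Γv u Z V * (j γ V W * j α W Z)))
              = (j β X u * Γv u Z V * epsLC α β γ) * ∑ W, j γ V W * j α W Z :=
                sum_factor _ fun W => by ring
            _ = (j β X u * Γv u Z V) * (epsLC α β γ * ∑ W, j γ V W * j α W Z) := by ring
      _ = (j β X u * Γv u Z V) * (2 * j β V Z) := by rw [key1 j hQ]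
      _ = j β X u * Γv u Z V * (2 * j β V Z) := by ring
  have f2 : ∀ (β : Fin 3) (u V W : Fin m),
      (∑ α, ∑ γ, ∑ Z, epsLC α β γ * (j β X u * Γv u V W * (j γ Z V * j α W Z)))
      = j β X u * Γv u V W * (-2 * j β W V) := by
    intro β u V W
    calc (∑ α, ∑ γ, ∑ Z, epsLC α β γ * (j β X u * Γv u V W * (j γ Z V * j α W Z)))
        = (j β X u * Γv u V W) * ∑ α, ∑ γ, epsLC α β γ * (∑ Z, j α W Z * j γ Z V) := by
          refine sum_factor _ fun α => ?_
          refine sum_factor _ fun γ => ?_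
          calc (∑ Z, epsLC α β γ * (j β X u * Γv u V W * (j γ Z V * j α W Z)))
              = (j β X u * Γv u V W * epsLC α β γ) * ∑ Z, j α W Z * j γ Z V :=
                sum_factor _ fun Z => by ring
            _ = (j β X u * Γv u V W) * (epsLC α β γ * ∑ Z, j α W Z * j γ Z V) := by ring
      _ = (j β X u * Γv u V W) * (-2 * j β W V) := by rw [key2 j hQ]
      _ = j β X u * Γv u V W * (-2 * j β W V) := by ring
  have p3a : (∑ Z, ∑ α, ∑ W, ∑ β, ∑ γ, ∑ u, ∑ V,
        epsLC α β γ * (j β X u * Γv u Z V * (j γ V W * j α W Z)))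
      = 2 * ∑ β, ∑ u, ∑ z, ∑ v, j β X u * Γv u z v * j β v z := by
    calc (∑ Z, ∑ α, ∑ W, ∑ β, ∑ γ, ∑ u, ∑ V,
        epsLC α β γ * (j β X u * Γv u Z V * (j γ V W * j α W Z)))
        = ∑ β, ∑ Z, ∑ α, ∑ W, ∑ γ, ∑ u, ∑ V,
            epsLC α β γ * (j β X u * Γv u Z V * (j γ V W * j α W Z)) := pull4 _
      _ = ∑ β, ∑ u, ∑ Z, ∑ α, ∑ W, ∑ γ, ∑ V,
            epsLC α β γ * (j β X u * Γv u Z V * (j γ V W * j α W Z)) :=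
          scongr fun β => pull5 _
      _ = ∑ β, ∑ u, ∑ Z, ∑ V, ∑ α, ∑ W, ∑ γ,
            epsLC α β γ * (j β X u * Γv u Z V * (j γ V W * j α W Z)) :=
          scongr fun β => scongr fun u => scongr fun Z => pull4 _
      _ = ∑ β, ∑ u, ∑ Z, ∑ V, ∑ α, ∑ γ, ∑ W,
            epsLC α β γ * (j β X u * Γv u Z V * (j γ V W * j α W Z)) :=
          scongr fun β => scongr fun u => scongr fun Z => scongr fun V =>
            scongr fun α => Finset.sum_comm
      _ = ∑ β, ∑ u, ∑ Z, ∑ V, j β X u * Γv u Z V * (2 * j β V Z) :=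
          scongr fun β => scongr fun u => scongr fun Z => scongr fun V => f1 β u Z V
      _ = 2 * ∑ β, ∑ u, ∑ z, ∑ v, j β X u * Γv u z v * j β v z := by
          refine sum_factor _ fun β => ?_
          refine sum_factor _ fun u => ?_
          refine sum_factor _ fun z => ?_
          exact sum_factor _ fun v => by ring
  have p3b : (∑ Z, ∑ α, ∑ W, ∑ β, ∑ γ, ∑ u, ∑ V,
        epsLC α β γ * (j β X u * Γv u V W * (j γ Z V * j α W Z)))
      = -2 * ∑ β, ∑ u, ∑ z, ∑ v, j β X u * Γv u z v * j β v z := by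
    calc (∑ Z, ∑ α, ∑ W, ∑ β, ∑ γ, ∑ u, ∑ V,
        epsLC α β γ * (j β X u * Γv u V W * (j γ Z V * j α W Z)))
        = ∑ β, ∑ Z, ∑ α, ∑ W, ∑ γ, ∑ u, ∑ V,
            epsLC α β γ * (j β X u * Γv u V W * (j γ Z V * j α W Z)) := pull4 _
      _ = ∑ β, ∑ u, ∑ Z, ∑ α, ∑ W, ∑ γ, ∑ V,
            epsLC α β γ * (j β X u * Γv u V W * (j γ Z V * j α W Z)) :=
          scongr fun β => pull5 _
      _ = ∑ β, ∑ u, ∑ V, ∑ Z, ∑ α, ∑ W, ∑ γ,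
            epsLC α β γ * (j β X u * Γv u V W * (j γ Z V * j α W Z)) :=
          scongr fun β => scongr fun u => pull5 _
      _ = ∑ β, ∑ u, ∑ V, ∑ α, ∑ W, ∑ γ, ∑ Z,
            epsLC α β γ * (j β X u * Γv u V W * (j γ Z V * j α W Z)) :=
          scongr fun β => scongr fun u => scongr fun V => push4 _
      _ = ∑ β, ∑ u, ∑ V, ∑ W, ∑ α, ∑ γ, ∑ Z,
            epsLC α β γ * (j β X u * Γv u V W * (j γ Z V * j α W Z)) :=
          scongr fun β => scongr fun u => scongr fun V => Finset.sum_comm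
      _ = ∑ β, ∑ u, ∑ V, ∑ W, j β X u * Γv u V W * (-2 * j β W V) :=
          scongr fun β => scongr fun u => scongr fun V => scongr fun W => f2 β u V W
      _ = -2 * ∑ β, ∑ u, ∑ z, ∑ v, j β X u * Γv u z v * j β v z := by
          refine sum_factor _ fun β => ?_
          refine sum_factor _ fun u => ?_
          refine sum_factor _ fun z => ?_
          exact sum_factor _ fun v => by ring
  calc (∑ Z, ∑ α, ∑ W, ∑ β, ∑ γ, epsLC α β γ * ((∑ u, j β X u * D u γ Z W) * j α W Z))
      = ∑ Z, ∑ α, ∑ W, ∑ β, ∑ γ,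
          ((∑ u, ∑ V, epsLC α β γ * (j β X u * Γv u Z V * (j γ V W * j α W Z)))
            - ∑ u, ∑ V, epsLC α β γ * (j β X u * Γv u V W * (j γ Z V * j α W Z))) :=
        scongr fun Z => scongr fun α => scongr fun W => scongr fun β => scongr fun γ =>
          e3 Z α W β γ
    _ = (∑ Z, ∑ α, ∑ W, ∑ β, ∑ γ, ∑ u, ∑ V,
          epsLC α β γ * (j β X u * Γv u Z V * (j γ V W * j α W Z)))
        - ∑ Z, ∑ α, ∑ W, ∑ β, ∑ γ, ∑ u, ∑ V,
          epsLC α β γ * (j β X u * Γv u V W * (j γ Z V * j α W Z)) := by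
        simp only [Finset.sum_sub_distrib]
    _ = 4 * ∑ β, ∑ u, ∑ z, ∑ v, j β X u * Γv u z v * j β v z := by
        rw [p3a, p3b]; ring

end trace2

section trace3
variable {m : ℕ} (j : Fin 3 → Fin m → Fin m → ℝ)
  (Γv : Fin m → Fin m → Fin m → ℝ) (D : Fin m → Fin 3 → Fin m → Fin m → ℝ)
variable (hD : ∀ A (α : Fin 3) B C, D A α B C
    = (∑ V, Γv A B V * j α V C) - ∑ V, Γv A V C * j α B V)
variable (hQ : ∀ α β a b, ∑ W, j α a W * j β W b
    = (if α = β then (-1:ℝ) else 0) * (if a = b then 1 else 0) + ∑ γ, epsLC α β γ * j γ a b)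

include hD hQ

lemma hP4 (X : Fin m) :
    (∑ Z, ∑ α, ∑ W, ∑ β, ∑ γ, epsLC α β γ * ((∑ u, j β Z u * D u γ X W) * j α W Z))
    = (-6 * ∑ Z, Γv Z X Z) - 2 * ∑ β, ∑ u, ∑ z, ∑ v, j β X u * Γv z u v * j β v z := by
  have e4 : ∀ Z (α : Fin 3) W (β γ : Fin 3),
      epsLC α β γ * ((∑ u, j β Z u * D u γ X W) * j α W Z)
      = (∑ u, ∑ V, epsLC α β γ * (j β Z u * Γv u X V * (j γ V W * j α W Z)))
        - ∑ u, ∑ V, epsLC α β γ * (j β Z u * Γv u V W * (j γ X V * j α W Z)) := by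
    intro Z α W β γ
    simp only [hD]
    simp only [mul_sub, sub_mul, Finset.mul_sum, Finset.sum_mul, Finset.sum_sub_distrib]
    congr 1 <;> exact scongr fun u => scongr fun V => by ring
  have f1 : ∀ (β : Fin 3) (u V Z : Fin m),
      (∑ α, ∑ γ, ∑ W, epsLC α β γ * (j β Z u * Γv u X V * (j γ V W * j α W Z)))
      = j β Z u * Γv u X V * (2 * j β V Z) := by
    intro β u V Z
    calc (∑ α, ∑ γ, ∑ W, epsLC α β γ * (j β Z u * Γv u X V * (j γ V W * j α W Z)))
        = (j β Z u * Γv u X V) * ∑ α, ∑ γ, epsLC α β γ * (∑ W, j γ V W * j α W Z) := by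
          refine sum_factor _ fun α => ?_
          refine sum_factor _ fun γ => ?_
          calc (∑ W, epsLC α β γ * (j β Z u * Γv u X V * (j γ V W * j α W Z)))
              = (j β Z u * Γv u X V * epsLC α β γ) * ∑ W, j γ V W * j α W Z :=
                sum_factor _ fun W => by ring
            _ = (j β Z u * Γv u X V) * (epsLC α β γ * ∑ W, j γ V W * j α W Z) := by ring
      _ = (j β Z u * Γv u X V) * (2 * j β V Z) := by rw [key1 j hQ]
      _ = j β Z u * Γv u X V * (2 * j β V Z) := by ring
  have f2 : ∀ (γ : Fin 3) (V u W : Fin m),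
      (∑ α, ∑ β, ∑ Z, epsLC α β γ * (j β Z u * Γv u V W * (j γ X V * j α W Z)))
      = j γ X V * Γv u V W * (2 * j γ W u) := by
    intro γ V u W
    calc (∑ α, ∑ β, ∑ Z, epsLC α β γ * (j β Z u * Γv u V W * (j γ X V * j α W Z)))
        = (j γ X V * Γv u V W) * ∑ α, ∑ β, epsLC α β γ * (∑ Z, j α W Z * j β Z u) := by
          refine sum_factor _ fun α => ?_
          refine sum_factor _ fun β => ?_
          calc (∑ Z, epsLC α β γ * (j β Z u * Γv u V W * (j γ X V * j α W Z)))
              = (j γ X V * Γv u V W * epsLC α β γ) * ∑ Z, j α W Z * j β Z u :=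
                sum_factor _ fun Z => by ring
            _ = (j γ X V * Γv u V W) * (epsLC α β γ * ∑ Z, j α W Z * j β Z u) := by ring
      _ = (j γ X V * Γv u V W) * (2 * j γ W u) := by rw [key3 j hQ]
      _ = j γ X V * Γv u V W * (2 * j γ W u) := by ring
  have p4a : (∑ Z, ∑ α, ∑ W, ∑ β, ∑ γ, ∑ u, ∑ V,
        epsLC α β γ * (j β Z u * Γv u X V * (j γ V W * j α W Z)))
      = -6 * ∑ Z, Γv Z X Z := by
    calc (∑ Z, ∑ α, ∑ W, ∑ β, ∑ γ, ∑ u, ∑ V,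
        epsLC α β γ * (j β Z u * Γv u X V * (j γ V W * j α W Z)))
        = ∑ β, ∑ Z, ∑ α, ∑ W, ∑ γ, ∑ u, ∑ V,
            epsLC α β γ * (j β Z u * Γv u X V * (j γ V W * j α W Z)) := pull4 _
      _ = ∑ β, ∑ u, ∑ Z, ∑ α, ∑ W, ∑ γ, ∑ V,
            epsLC α β γ * (j β Z u * Γv u X V * (j γ V W * j α W Z)) :=
          scongr fun β => pull5 _
      _ = ∑ β, ∑ u, ∑ V, ∑ Z, ∑ α, ∑ W, ∑ γ,
            epsLC α β γ * (j β Z u * Γv u X V * (j γ V W * j α W Z)) :=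
          scongr fun β => scongr fun u => pull5 _
      _ = ∑ β, ∑ u, ∑ V, ∑ Z, ∑ α, ∑ γ, ∑ W,
            epsLC α β γ * (j β Z u * Γv u X V * (j γ V W * j α W Z)) :=
          scongr fun β => scongr fun u => scongr fun V => scongr fun Z =>
            scongr fun α => Finset.sum_comm
      _ = ∑ β, ∑ u, ∑ V, ∑ Z, j β Z u * Γv u X V * (2 * j β V Z) :=
          scongr fun β => scongr fun u => scongr fun V => scongr fun Z => f1 β u V Z
      _ = ∑ β, ∑ u, ∑ V, (2 * Γv u X V) * -(if V = u then (1:ℝ) else 0) :=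
          scongr fun β => scongr fun u => scongr fun V => by
            calc (∑ Z, j β Z u * Γv u X V * (2 * j β V Z))
                = (2 * Γv u X V) * ∑ Z, j β V Z * j β Z u :=
                  sum_factor _ fun Z => by ring
              _ = (2 * Γv u X V) * -(if V = u then (1:ℝ) else 0) := by rw [key0 j hQ]
      _ = ∑ β, ∑ u, ∑ V, (-(2 * Γv u X V)) * (if V = u then (1:ℝ) else 0) :=
          scongr fun β => scongr fun u => scongr fun V => by ring
      _ = ∑ _β : Fin 3, ∑ u, -(2 * Γv u X u) :=
          scongr fun β => scongr fun u => sum_delta _ u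
      _ = (3:ℝ) * ∑ u, -(2 * Γv u X u) := sum3_const _
      _ = -6 * ∑ Z, Γv Z X Z := by
          rw [Finset.mul_sum, Finset.mul_sum]; exact scongr fun Z => by ring
  have p4b : (∑ Z, ∑ α, ∑ W, ∑ β, ∑ γ, ∑ u, ∑ V,
        epsLC α β γ * (j β Z u * Γv u V W * (j γ X V * j α W Z)))
      = 2 * ∑ β, ∑ u, ∑ z, ∑ v, j β X u * Γv z u v * j β v z := by
    calc (∑ Z, ∑ α, ∑ W, ∑ β, ∑ γ, ∑ u, ∑ V,
        epsLC α β γ * (j β Z u * Γv u V W * (j γ X V * j α W Z)))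
        = ∑ γ, ∑ Z, ∑ α, ∑ W, ∑ β, ∑ u, ∑ V,
            epsLC α β γ * (j β Z u * Γv u V W * (j γ X V * j α W Z)) := pull5 _
      _ = ∑ γ, ∑ V, ∑ Z, ∑ α, ∑ W, ∑ β, ∑ u,
            epsLC α β γ * (j β Z u * Γv u V W * (j γ X V * j α W Z)) :=
          scongr fun γ => pull6 _
      _ = ∑ γ, ∑ V, ∑ u, ∑ Z, ∑ α, ∑ W, ∑ β,
            epsLC α β γ * (j β Z u * Γv u V W * (j γ X V * j α W Z)) :=
          scongr fun γ => scongr fun V => pull5 _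
      _ = ∑ γ, ∑ V, ∑ u, ∑ α, ∑ W, ∑ β, ∑ Z,
            epsLC α β γ * (j β Z u * Γv u V W * (j γ X V * j α W Z)) :=
          scongr fun γ => scongr fun V => scongr fun u => push4 _
      _ = ∑ γ, ∑ V, ∑ u, ∑ W, ∑ α, ∑ β, ∑ Z,
            epsLC α β γ * (j β Z u * Γv u V W * (j γ X V * j α W Z)) :=
          scongr fun γ => scongr fun V => scongr fun u => Finset.sum_comm
      _ = ∑ γ, ∑ V, ∑ u, ∑ W, j γ X V * Γv u V W * (2 * j γ W u) :=
          scongr fun γ => scongr fun V => scongr fun u => scongr fun W => f2 γ V u W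
      _ = 2 * ∑ β, ∑ u, ∑ z, ∑ v, j β X u * Γv z u v * j β v z := by
          refine sum_factor _ fun γ => ?_
          refine sum_factor _ fun V => ?_
          refine sum_factor _ fun u => ?_
          exact sum_factor _ fun W => by ring
  calc (∑ Z, ∑ α, ∑ W, ∑ β, ∑ γ, epsLC α β γ * ((∑ u, j β Z u * D u γ X W) * j α W Z))
      = ∑ Z, ∑ α, ∑ W, ∑ β, ∑ γ,
          ((∑ u, ∑ V, epsLC α β γ * (j β Z u * Γv u X V * (j γ V W * j α W Z)))
            - ∑ u, ∑ V, epsLC α β γ * (j β Z u * Γv u V W * (j γ X V * j α W Z))) :=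
        scongr fun Z => scongr fun α => scongr fun W => scongr fun β => scongr fun γ =>
          e4 Z α W β γ
    _ = (∑ Z, ∑ α, ∑ W, ∑ β, ∑ γ, ∑ u, ∑ V,
          epsLC α β γ * (j β Z u * Γv u X V * (j γ V W * j α W Z)))
        - ∑ Z, ∑ α, ∑ W, ∑ β, ∑ γ, ∑ u, ∑ V,
          epsLC α β γ * (j β Z u * Γv u V W * (j γ X V * j α W Z)) := by
        simp only [Finset.sum_sub_distrib]
    _ = (-6 * ∑ Z, Γv Z X Z) - 2 * ∑ β, ∑ u, ∑ z, ∑ v, j β X u * Γv z u v * j β v z := by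
        rw [p4a, p4b]

end trace3

section traceMain
variable {m : ℕ} (j : Fin 3 → Fin m → Fin m → ℝ)
  (Γv Tv : Fin m → Fin m → Fin m → ℝ) (D : Fin m → Fin 3 → Fin m → Fin m → ℝ)

lemma obata_trace_alg
    (hD : ∀ A (α : Fin 3) B C, D A α B C
      = (∑ V, Γv A B V * j α V C) - ∑ V, Γv A V C * j α B V)
    (hQ : ∀ α β a b, ∑ W, j α a W * j β W b
      = (if α = β then (-1:ℝ) else 0) * (if a = b then 1 else 0) + ∑ γ, epsLC α β γ * j γ a b)
    (hΓ : ∀ a b c, Γv a b c - Γv b a c = 2 * Tv a b c)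
    (hT : ∀ a b c, Tv a b c = -Tv b a c)
    (X : Fin m) :
    (∑ Z, -(1 / 6 : ℝ) * ∑ α, ∑ W, ((D X α Z W + D Z α X W
        + (1 / 2) * ∑ β, ∑ γ, epsLC α β γ *
            ((∑ u, j β X u * D u γ Z W) + ∑ u, j β Z u * D u γ X W)) * j α W Z))
    = (∑ Z, Γv Z X Z) - (2/3) * ∑ α, ∑ a, ∑ b, ∑ c, j α X a * Tv a b c * j α c b := by
  have inner : ∀ Z (α : Fin 3) W,
      (D X α Z W + D Z α X W
        + (1 / 2) * ∑ β, ∑ γ, epsLC α β γ *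
            ((∑ u, j β X u * D u γ Z W) + ∑ u, j β Z u * D u γ X W)) * j α W Z
      = D X α Z W * j α W Z + D Z α X W * j α W Z
        + (1/2) * ((∑ β, ∑ γ, epsLC α β γ * ((∑ u, j β X u * D u γ Z W) * j α W Z))
          + ∑ β, ∑ γ, epsLC α β γ * ((∑ u, j β Z u * D u γ X W) * j α W Z)) := by
    intro Z α W
    have hsm : (∑ β, ∑ γ, epsLC α β γ *
          ((∑ u, j β X u * D u γ Z W) + ∑ u, j β Z u * D u γ X W)) * j α W Z
        = (∑ β, ∑ γ, epsLC α β γ * ((∑ u, j β X u * D u γ Z W) * j α W Z))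
          + ∑ β, ∑ γ, epsLC α β γ * ((∑ u, j β Z u * D u γ X W) * j α W Z) := by
      rw [Finset.sum_mul]
      calc (∑ β, (∑ γ, epsLC α β γ *
            ((∑ u, j β X u * D u γ Z W) + ∑ u, j β Z u * D u γ X W)) * j α W Z)
          = ∑ β, ∑ γ, (epsLC α β γ *
              ((∑ u, j β X u * D u γ Z W) + ∑ u, j β Z u * D u γ X W)) * j α W Z :=
            scongr fun β => by rw [Finset.sum_mul]
        _ = ∑ β, ∑ γ, (epsLC α β γ * ((∑ u, j β X u * D u γ Z W) * j α W Z)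
              + epsLC α β γ * ((∑ u, j β Z u * D u γ X W) * j α W Z)) :=
            scongr fun β => scongr fun γ => by ring
        _ = _ := by simp only [Finset.sum_add_distrib]
    calc (D X α Z W + D Z α X W + (1 / 2) * ∑ β, ∑ γ, epsLC α β γ *
            ((∑ u, j β X u * D u γ Z W) + ∑ u, j β Z u * D u γ X W)) * j α W Z
        = D X α Z W * j α W Z + D Z α X W * j α W Z
          + (1/2) * ((∑ β, ∑ γ, epsLC α β γ *
              ((∑ u, j β X u * D u γ Z W) + ∑ u, j β Z u * D u γ X W)) * j α W Z) := by
          ring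
      _ = _ := by rw [hsm]
  have hC : (∑ β, ∑ u, ∑ z, ∑ v, j β X u * Γv z u v * j β v z)
      - (∑ β, ∑ u, ∑ z, ∑ v, j β X u * Γv u z v * j β v z)
      = (-2) * ∑ α, ∑ a, ∑ b, ∑ c, j α X a * Tv a b c * j α c b := by
    simp only [← Finset.sum_sub_distrib]
    refine sum_factor _ fun α => ?_
    refine sum_factor _ fun u => ?_
    refine sum_factor _ fun z => ?_
    refine sum_factor _ fun v => ?_
    linear_combination (j α X u * j α v z) * hΓ z u v + 2 * (j α X u * j α v z) * hT z u v
  calc (∑ Z, -(1 / 6 : ℝ) * ∑ α, ∑ W, ((D X α Z W + D Z α X W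
        + (1 / 2) * ∑ β, ∑ γ, epsLC α β γ *
            ((∑ u, j β X u * D u γ Z W) + ∑ u, j β Z u * D u γ X W)) * j α W Z))
      = -(1/6 : ℝ) * ∑ Z, ∑ α, ∑ W, ((D X α Z W + D Z α X W
          + (1 / 2) * ∑ β, ∑ γ, epsLC α β γ *
              ((∑ u, j β X u * D u γ Z W) + ∑ u, j β Z u * D u γ X W)) * j α W Z) := by
        rw [← Finset.mul_sum]
    _ = -(1/6 : ℝ) * ∑ Z, ∑ α, ∑ W,
          (D X α Z W * j α W Z + D Z α X W * j α W Z
          + (1/2) * ((∑ β, ∑ γ, epsLC α β γ * ((∑ u, j β X u * D u γ Z W) * j α W Z))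
            + ∑ β, ∑ γ, epsLC α β γ * ((∑ u, j β Z u * D u γ X W) * j α W Z))) := by
        congr 1
        exact scongr fun Z => scongr fun α => scongr fun W => inner Z α W
    _ = -(1/6 : ℝ) * ((∑ Z, ∑ α, ∑ W, D X α Z W * j α W Z)
          + (∑ Z, ∑ α, ∑ W, D Z α X W * j α W Z)
          + (1/2) * ((∑ Z, ∑ α, ∑ W, ∑ β, ∑ γ, epsLC α β γ *
              ((∑ u, j β X u * D u γ Z W) * j α W Z))
            + ∑ Z, ∑ α, ∑ W, ∑ β, ∑ γ, epsLC α β γ *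
              ((∑ u, j β Z u * D u γ X W) * j α W Z))) := by
        congr 1
        simp only [Finset.sum_add_distrib, ← Finset.mul_sum]
    _ = (∑ Z, Γv Z X Z) - (2/3) * ∑ α, ∑ a, ∑ b, ∑ c, j α X a * Tv a b c * j α c b := by
        rw [hP1 j Γv D hD hQ X, hP2 j Γv D hD hQ X, hP3 j Γv D hD hQ X, hP4 j Γv D hD hQ X]
        linear_combination (1/3) * hC

end traceMain

/-- Algebraic core of the covariant constancy of `V`. -/
lemma dV_alg {m : ℕ} (j : Fin 3 → Fin m → Fin m → ℝ) (Γv Tv : Fin m → Fin m → Fin m → ℝ)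
    (DJ : Fin m → Fin 3 → Fin m → Fin m → ℝ) (DT : Fin m → Fin m → Fin m → Fin m → ℝ)
    (hDJ : ∀ A α B C, DJ A α B C = (∑ V, Γv A B V * j α V C) - ∑ V, Γv A V C * j α B V)
    (hDT : ∀ A a b c, DT A a b c
      = ((∑ V, Γv A a V * Tv V b c) + ∑ V, Γv A b V * Tv a V c) - ∑ V, Γv A V c * Tv a b V)
    (X Y : Fin m) :
    ∑ α, ∑ a, ∑ b, ∑ c,
      (DJ X α Y a * Tv a b c * j α c b + j α Y a * DT X a b c * j α c b
        + j α Y a * Tv a b c * DJ X α c b)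
      = ∑ W, Γv X Y W * ∑ α, ∑ a, ∑ b, ∑ c, j α W a * Tv a b c * j α c b := by
  have step1 : ∀ α a b c,
      DJ X α Y a * Tv a b c * j α c b + j α Y a * DT X a b c * j α c b
        + j α Y a * Tv a b c * DJ X α c b
      = ∑ V, (Γv X Y V * j α V a * Tv a b c * j α c b
          - Γv X V a * j α Y V * Tv a b c * j α c b
          + Γv X a V * j α Y a * Tv V b c * j α c b
          + Γv X b V * j α Y a * Tv a V c * j α c b
          - Γv X V c * j α Y a * Tv a b V * j α c b
          + Γv X c V * j α Y a * Tv a b c * j α V b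
          - Γv X V b * j α Y a * Tv a b c * j α c V) := by
    intro α a b c
    have e1 : DJ X α Y a = ∑ V, (Γv X Y V * j α V a - Γv X V a * j α Y V) := by
      rw [hDJ, Finset.sum_sub_distrib]
    have e2 : DT X a b c = ∑ V, (Γv X a V * Tv V b c + Γv X b V * Tv a V c
        - Γv X V c * Tv a b V) := by
      rw [hDT, Finset.sum_sub_distrib, Finset.sum_add_distrib]
    have e3 : DJ X α c b = ∑ V, (Γv X c V * j α V b - Γv X V b * j α c V) := by
      rw [hDJ, Finset.sum_sub_distrib]
    rw [e1, e2, e3]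
    simp only [Finset.sum_mul, Finset.mul_sum]
    rw [← Finset.sum_add_distrib, ← Finset.sum_add_distrib]
    exact Finset.sum_congr rfl fun V _ => by ring
  have main : ∑ α, ∑ a, ∑ b, ∑ c,
      (DJ X α Y a * Tv a b c * j α c b + j α Y a * DT X a b c * j α c b
        + j α Y a * Tv a b c * DJ X α c b)
      = ∑ α, ∑ a, ∑ b, ∑ c, ∑ V,
          (Γv X Y V * j α V a * Tv a b c * j α c b
          - Γv X V a * j α Y V * Tv a b c * j α c b
          + Γv X a V * j α Y a * Tv V b c * j α c b
          + Γv X b V * j α Y a * Tv a V c * j α c b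
          - Γv X V c * j α Y a * Tv a b V * j α c b
          + Γv X c V * j α Y a * Tv a b c * j α V b
          - Γv X V b * j α Y a * Tv a b c * j α c V) :=
    scongr fun α => scongr fun a => scongr fun b => scongr fun c => step1 α a b c
  rw [main]
  simp only [Finset.sum_add_distrib, Finset.sum_sub_distrib]
  have h32 : (∑ α, ∑ a, ∑ b, ∑ c, ∑ V, Γv X a V * j α Y a * Tv V b c * j α c b)
      = ∑ α, ∑ a, ∑ b, ∑ c, ∑ V, Γv X V a * j α Y V * Tv a b c * j α c b := by
    calc (∑ α, ∑ a, ∑ b, ∑ c, ∑ V, Γv X a V * j α Y a * Tv V b c * j α c b)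
        = ∑ α, ∑ a, ∑ V, ∑ b, ∑ c, Γv X a V * j α Y a * Tv V b c * j α c b :=
          scongr fun α => scongr fun a => pull3 _
      _ = ∑ α, ∑ a, ∑ b, ∑ c, ∑ V, Γv X V a * j α Y V * Tv a b c * j α c b :=
          (scongr fun α => pull4 _).symm
  have h65 : (∑ α, ∑ a, ∑ b, ∑ c, ∑ V, Γv X c V * j α Y a * Tv a b c * j α V b)
      = ∑ α, ∑ a, ∑ b, ∑ c, ∑ V, Γv X V c * j α Y a * Tv a b V * j α c b :=
    scongr fun α => scongr fun a => scongr fun b => Finset.sum_comm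
  have h74 : (∑ α, ∑ a, ∑ b, ∑ c, ∑ V, Γv X V b * j α Y a * Tv a b c * j α c V)
      = ∑ α, ∑ a, ∑ b, ∑ c, ∑ V, Γv X b V * j α Y a * Tv a V c * j α c b := by
    calc (∑ α, ∑ a, ∑ b, ∑ c, ∑ V, Γv X V b * j α Y a * Tv a b c * j α c V)
        = ∑ α, ∑ a, ∑ b, ∑ V, ∑ c, Γv X V b * j α Y a * Tv a b c * j α c V :=
          scongr fun α => scongr fun a => scongr fun b => Finset.sum_comm
      _ = ∑ α, ∑ a, ∑ V, ∑ b, ∑ c, Γv X V b * j α Y a * Tv a b c * j α c V :=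
          scongr fun α => scongr fun a => Finset.sum_comm
      _ = ∑ α, ∑ a, ∑ b, ∑ V, ∑ c, Γv X b V * j α Y a * Tv a V c * j α c b := rfl
      _ = ∑ α, ∑ a, ∑ b, ∑ c, ∑ V, Γv X b V * j α Y a * Tv a V c * j α c b :=
          scongr fun α => scongr fun a => scongr fun b => Finset.sum_comm
  have h1 : (∑ α, ∑ a, ∑ b, ∑ c, ∑ V, Γv X Y V * j α V a * Tv a b c * j α c b)
      = ∑ W, Γv X Y W * ∑ α, ∑ a, ∑ b, ∑ c, j α W a * Tv a b c * j α c b := by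
    calc (∑ α, ∑ a, ∑ b, ∑ c, ∑ V, Γv X Y V * j α V a * Tv a b c * j α c b)
        = ∑ α, ∑ V, ∑ a, ∑ b, ∑ c, Γv X Y V * j α V a * Tv a b c * j α c b :=
          scongr fun α => pull4 _
      _ = ∑ V, ∑ α, ∑ a, ∑ b, ∑ c, Γv X Y V * j α V a * Tv a b c * j α c b :=
          Finset.sum_comm
      _ = ∑ W, Γv X Y W * ∑ α, ∑ a, ∑ b, ∑ c, j α W a * Tv a b c * j α c b := by
          refine scongr fun W => ?_
          refine sum_factor _ fun α => ?_
          refine sum_factor _ fun a => ?_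
          refine sum_factor _ fun b => ?_
          refine sum_factor _ fun c => by ring
  rw [h32, h65, h74, h1]
  ring

section METRIC
variable {n : ℕ} {U : Set (Fin n → ℝ)} (hU : IsOpen U)
variable {g : (Fin n → ℝ) → Matrix (Fin n) (Fin n) ℝ}
variable (hgs : ∀ X Y, ContDiffOn ℝ (⊤ : ℕ∞) (fun y => g y X Y) U)
variable (hgsym : ∀ X Y, ∀ x ∈ U, g x X Y = g x Y X)
variable (hginv : ∀ x ∈ U, IsUnit (g x).det)
include hU hgs hgsym hginv

lemma ginv_symm : ∀ x ∈ U, ∀ Z V, (g x)⁻¹ Z V = (g x)⁻¹ V Z := by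
  intro x hx Z V
  have ht : Matrix.transpose (g x) = g x := by
    ext i j; exact hgsym j i x hx
  calc (g x)⁻¹ Z V = Matrix.transpose ((g x)⁻¹) V Z := rfl
    _ = (Matrix.transpose (g x))⁻¹ V Z := by rw [Matrix.transpose_nonsing_inv]
    _ = (g x)⁻¹ V Z := by rw [ht]

lemma ginv_mul_g : ∀ x ∈ U, ∀ Z V, ∑ W, (g x)⁻¹ Z W * g x W V
    = (if Z = V then (1:ℝ) else 0) := by
  intro x hx Z V
  have := Matrix.nonsing_inv_mul (g x) (hginv x hx)
  calc ∑ W, (g x)⁻¹ Z W * g x W V = ((g x)⁻¹ * g x) Z V := (Matrix.mul_apply).symm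
    _ = (1 : Matrix (Fin n) (Fin n) ℝ) Z V := by rw [this]
    _ = (if Z = V then (1:ℝ) else 0) := Matrix.one_apply

lemma g_mul_ginv : ∀ x ∈ U, ∀ Z V, ∑ W, g x Z W * (g x)⁻¹ W V
    = (if Z = V then (1:ℝ) else 0) := by
  intro x hx Z V
  have := Matrix.mul_nonsing_inv (g x) (hginv x hx)
  calc ∑ W, g x Z W * (g x)⁻¹ W V = (g x * (g x)⁻¹) Z V := (Matrix.mul_apply).symm
    _ = (1 : Matrix (Fin n) (Fin n) ℝ) Z V := by rw [this]
    _ = (if Z = V then (1:ℝ) else 0) := Matrix.one_apply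

lemma christoffel_symm : ∀ x ∈ U, ∀ A B C,
    christoffel g A B C x = christoffel g B A C x := by
  intro x hx A B C
  unfold christoffel
  congr 1
  refine scongr fun V => ?_
  rw [pd_congr hU hx (fun y hy => hgsym A B y hy) V]
  ring

lemma dginv : ∀ x ∈ U, ∀ (A Z Q : Fin n),
    pd A (fun y => (g y)⁻¹ Z Q) x
    = -∑ P, ∑ R, (g x)⁻¹ Z P * pd A (fun y => g y P R) x * (g x)⁻¹ R Q := by
  intro x hx A Z Q
  have hGiD : ∀ P R, DifferentiableAt ℝ (fun y => (g y)⁻¹ P R) x :=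
    fun P R => cdo_diffAt (cdo_inv_entry hgs hginv P R) hU hx
  have hgD : ∀ P R, DifferentiableAt ℝ (fun y => g y P R) x :=
    fun P R => cdo_diffAt (hgs P R) hU hx
  have h1 : ∀ V : Fin n, ∑ W, (pd A (fun y => (g y)⁻¹ Z W) x * g x W V
      + (g x)⁻¹ Z W * pd A (fun y => g y W V) x) = 0 := by
    intro V
    have e0 : pd A (fun y => ∑ W, (g y)⁻¹ Z W * g y W V) x = 0 := by
      rw [pd_congr hU hx (fun y hy => ginv_mul_g hU hgs hgsym hginv y hy Z V)
        A, pd_const]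
    calc ∑ W, (pd A (fun y => (g y)⁻¹ Z W) x * g x W V
          + (g x)⁻¹ Z W * pd A (fun y => g y W V) x)
        = ∑ W, pd A (fun y => (g y)⁻¹ Z W * g y W V) x :=
          scongr fun W => (pd_mul (hGiD Z W) (hgD W V) A).symm
      _ = pd A (fun y => ∑ W, (g y)⁻¹ Z W * g y W V) x :=
          (pd_sum (fun W _ => DifferentiableAt.mul (hGiD Z W) (hgD W V)) A).symm
      _ = 0 := e0
  have h1' : ∀ V : Fin n, ∑ W, pd A (fun y => (g y)⁻¹ Z W) x * g x W V
      = -∑ W, (g x)⁻¹ Z W * pd A (fun y => g y W V) x := by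
    intro V
    have := h1 V
    rw [Finset.sum_add_distrib] at this
    linarith
  calc pd A (fun y => (g y)⁻¹ Z Q) x
      = ∑ W, pd A (fun y => (g y)⁻¹ Z W) x * (if W = Q then (1:ℝ) else 0) :=
        (sum_delta (fun W => pd A (fun y => (g y)⁻¹ Z W) x) Q).symm
    _ = ∑ W, pd A (fun y => (g y)⁻¹ Z W) x * ∑ V, g x W V * (g x)⁻¹ V Q :=
        scongr fun W => by rw [g_mul_ginv hU hgs hgsym hginv x hx W Q]
    _ = ∑ W, ∑ V, pd A (fun y => (g y)⁻¹ Z W) x * g x W V * (g x)⁻¹ V Q :=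
        scongr fun W => by
          rw [Finset.mul_sum]; exact scongr fun V => by ring
    _ = ∑ V, ∑ W, pd A (fun y => (g y)⁻¹ Z W) x * g x W V * (g x)⁻¹ V Q :=
        Finset.sum_comm
    _ = ∑ V, (∑ W, pd A (fun y => (g y)⁻¹ Z W) x * g x W V) * (g x)⁻¹ V Q :=
        scongr fun V => (Finset.sum_mul _ _ _).symm
    _ = ∑ V, (-∑ W, (g x)⁻¹ Z W * pd A (fun y => g y W V) x) * (g x)⁻¹ V Q :=
        scongr fun V => by rw [h1' V]
    _ = ∑ V, ∑ W, -((g x)⁻¹ Z W * pd A (fun y => g y W V) x * (g x)⁻¹ V Q) :=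
        scongr fun V => by
          rw [neg_mul, Finset.sum_mul, ← Finset.sum_neg_distrib]
    _ = ∑ W, ∑ V, -((g x)⁻¹ Z W * pd A (fun y => g y W V) x * (g x)⁻¹ V Q) :=
        Finset.sum_comm
    _ = -∑ P, ∑ R, (g x)⁻¹ Z P * pd A (fun y => g y P R) x * (g x)⁻¹ R Q := by
        simp only [Finset.sum_neg_distrib]

end METRIC

lemma S_alg {n : ℕ} (G A B : Fin n → Fin n → ℝ) (hGs : ∀ a b, G a b = G b a) :
    (∑ Z, ∑ V, (-∑ P, ∑ R, G Z P * B P R * G R V) * A Z V)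
    = ∑ Z, ∑ V, (-∑ P, ∑ R, G Z P * A P R * G R V) * B Z V := by
  have core : ∀ A B : Fin n → Fin n → ℝ,
      (∑ Z, ∑ V, ∑ P, ∑ R, G Z P * B P R * G R V * A Z V)
      = ∑ P, ∑ R, ∑ Z, ∑ V, G Z P * B P R * G R V * A Z V := by
    intro A B
    calc (∑ Z, ∑ V, ∑ P, ∑ R, G Z P * B P R * G R V * A Z V)
        = ∑ V, ∑ P, ∑ R, ∑ Z, G Z P * B P R * G R V * A Z V := push4 _
      _ = ∑ P, ∑ R, ∑ Z, ∑ V, G Z P * B P R * G R V * A Z V := push4 _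
  have expand : ∀ A B : Fin n → Fin n → ℝ,
      (∑ Z, ∑ V, (-∑ P, ∑ R, G Z P * B P R * G R V) * A Z V)
      = -∑ Z, ∑ V, ∑ P, ∑ R, G Z P * B P R * G R V * A Z V := by
    intro A B
    calc (∑ Z, ∑ V, (-∑ P, ∑ R, G Z P * B P R * G R V) * A Z V)
        = ∑ Z, ∑ V, -(∑ P, ∑ R, (G Z P * B P R * G R V) * A Z V) := by
          refine scongr fun Z => scongr fun V => ?_
          rw [neg_mul, Finset.sum_mul]
          congr 1
          exact scongr fun P => by rw [Finset.sum_mul]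
      _ = -∑ Z, ∑ V, ∑ P, ∑ R, G Z P * B P R * G R V * A Z V := by
          simp only [Finset.sum_neg_distrib]
  rw [expand A B, expand B A, core A B]
  congr 1
  refine scongr fun a => scongr fun b => scongr fun c => scongr fun d => ?_
  rw [hGs c a, hGs b d]
  ring

section METRIC2
variable {n : ℕ} {U : Set (Fin n → ℝ)} (hU : IsOpen U)
variable {g : (Fin n → ℝ) → Matrix (Fin n) (Fin n) ℝ}
variable (hgs : ∀ X Y, ContDiffOn ℝ (⊤ : ℕ∞) (fun y => g y X Y) U)
variable (hgsym : ∀ X Y, ∀ x ∈ U, g x X Y = g x Y X)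
variable (hginv : ∀ x ∈ U, IsUnit (g x).det)
include hU hgs hgsym hginv

lemma cdo_chr : ∀ A B C, ContDiffOn ℝ (⊤:ℕ∞) (christoffel g A B C) U := by
  intro A B C
  have h : christoffel g A B C = fun x => (1/2 : ℝ) * ∑ V, (g x)⁻¹ C V *
      (pd A (fun y => g y B V) x + pd B (fun y => g y A V) x
        - pd V (fun y => g y A B) x) := rfl
  rw [h]
  exact contDiffOn_const.mul (ContDiffOn.sum fun V _ =>
    (cdo_inv_entry hgs hginv C V).mul
      (((cdo_pd (hgs B V) hU A).add (cdo_pd (hgs A V) hU B)).sub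
        (cdo_pd (hgs A B) hU V)))

lemma chr_trace : ∀ x ∈ U, ∀ X : Fin n, ∑ Z, christoffel g X Z Z x
    = (1/2 : ℝ) * ∑ Z, ∑ V, (g x)⁻¹ Z V * pd X (fun y => g y Z V) x := by
  intro x hx X
  have hcancel : (∑ Z, ∑ V, (g x)⁻¹ Z V * pd V (fun y => g y X Z) x)
      = ∑ Z, ∑ V, (g x)⁻¹ Z V * pd Z (fun y => g y X V) x := by
    calc (∑ Z, ∑ V, (g x)⁻¹ Z V * pd V (fun y => g y X Z) x)
        = ∑ V, ∑ Z, (g x)⁻¹ Z V * pd V (fun y => g y X Z) x := Finset.sum_comm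
      _ = ∑ Z, ∑ V, (g x)⁻¹ Z V * pd Z (fun y => g y X V) x :=
          scongr fun Z => scongr fun V => by
            rw [ginv_symm hU hgs hgsym hginv x hx]
  calc (∑ Z, christoffel g X Z Z x)
      = ∑ Z, (1/2 : ℝ) * ∑ V, (g x)⁻¹ Z V *
          (pd X (fun y => g y Z V) x + pd Z (fun y => g y X V) x
            - pd V (fun y => g y X Z) x) := rfl
    _ = (1/2 : ℝ) * ∑ Z, ∑ V, (g x)⁻¹ Z V *
          (pd X (fun y => g y Z V) x + pd Z (fun y => g y X V) x
            - pd V (fun y => g y X Z) x) := by rw [← Finset.mul_sum]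
    _ = (1/2 : ℝ) * ((∑ Z, ∑ V, (g x)⁻¹ Z V * pd X (fun y => g y Z V) x)
          + (∑ Z, ∑ V, (g x)⁻¹ Z V * pd Z (fun y => g y X V) x)
          - ∑ Z, ∑ V, (g x)⁻¹ Z V * pd V (fun y => g y X Z) x) := by
        congr 1
        calc (∑ Z, ∑ V, (g x)⁻¹ Z V *
            (pd X (fun y => g y Z V) x + pd Z (fun y => g y X V) x
              - pd V (fun y => g y X Z) x))
            = ∑ Z, ∑ V, ((g x)⁻¹ Z V * pd X (fun y => g y Z V) x
              + (g x)⁻¹ Z V * pd Z (fun y => g y X V) x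
              - (g x)⁻¹ Z V * pd V (fun y => g y X Z) x) :=
              scongr fun Z => scongr fun V => by ring
          _ = _ := by simp only [Finset.sum_add_distrib, Finset.sum_sub_distrib]
    _ = (1/2 : ℝ) * ∑ Z, ∑ V, (g x)⁻¹ Z V * pd X (fun y => g y Z V) x := by
        rw [hcancel]; ring

lemma closed : ∀ x ∈ U, ∀ X Y : Fin n,
    pd Y (fun y => ∑ Z, christoffel g X Z Z y) x
    = pd X (fun y => ∑ Z, christoffel g Y Z Z y) x := by
  intro x hx X Y
  have hgD : ∀ (y) (_ : y ∈ U) (P R : Fin n), DifferentiableAt ℝ (fun z => g z P R) y :=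
    fun y hy P R => cdo_diffAt (hgs P R) hU hy
  have hGiD : ∀ (y) (_ : y ∈ U) (P R : Fin n),
      DifferentiableAt ℝ (fun z => (g z)⁻¹ P R) y :=
    fun y hy P R => cdo_diffAt (cdo_inv_entry hgs hginv P R) hU hy
  have hpdgD : ∀ (A : Fin n) (y) (_ : y ∈ U) (P R : Fin n),
      DifferentiableAt ℝ (pd A (fun z => g z P R)) y :=
    fun A y hy P R => cdo_diffAt (cdo_pd (hgs P R) hU A) hU hy
  have key : ∀ A B : Fin n,
      pd B (fun y => ∑ Z, christoffel g A Z Z y) x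
      = (1/2 : ℝ) * ∑ Z, ∑ V, (pd B (fun y => (g y)⁻¹ Z V) x * pd A (fun y => g y Z V) x
          + (g x)⁻¹ Z V * pd B (pd A (fun y => g y Z V)) x) := by
    intro A B
    have e1 : pd B (fun y => ∑ Z, christoffel g A Z Z y) x
        = pd B (fun y => (1/2 : ℝ) * ∑ Z, ∑ V, (g y)⁻¹ Z V * pd A (fun z => g z Z V) y) x :=
      pd_congr hU hx (fun y hy => chr_trace hU hgs hgsym hginv y hy A) B
    rw [e1]
    rw [pd_const_mul (by
      exact DifferentiableAt.fun_sum fun Z _ => DifferentiableAt.fun_sum fun V _ =>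
        (hGiD x hx Z V).fun_mul (hpdgD A x hx Z V)) _ B]
    congr 1
    rw [pd_sum (fun Z _ => DifferentiableAt.fun_sum fun V _ =>
      (hGiD x hx Z V).fun_mul (hpdgD A x hx Z V)) B]
    refine scongr fun Z => ?_
    rw [pd_sum (fun V _ => (hGiD x hx Z V).fun_mul (hpdgD A x hx Z V)) B]
    refine scongr fun V => ?_
    exact pd_mul (hGiD x hx Z V) (hpdgD A x hx Z V) B
  rw [key X Y, key Y X]
  congr 1
  have swap2 : ∀ Z V : Fin n, pd Y (pd X (fun y => g y Z V)) x
      = pd X (pd Y (fun y => g y Z V)) x :=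
    fun Z V => pd_swap (hgs Z V) hU hx Y X
  simp only [Finset.sum_add_distrib]
  congr 1
  · calc (∑ Z, ∑ V, pd Y (fun y => (g y)⁻¹ Z V) x * pd X (fun y => g y Z V) x)
        = ∑ Z, ∑ V, (-∑ P, ∑ R, (g x)⁻¹ Z P * pd Y (fun y => g y P R) x * (g x)⁻¹ R V)
            * pd X (fun y => g y Z V) x :=
          scongr fun Z => scongr fun V => by
            rw [dginv hU hgs hgsym hginv x hx Y Z V]
      _ = ∑ Z, ∑ V, (-∑ P, ∑ R, (g x)⁻¹ Z P * pd X (fun y => g y P R) x * (g x)⁻¹ R V)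
            * pd Y (fun y => g y Z V) x :=
          S_alg (fun a b => (g x)⁻¹ a b) (fun a b => pd X (fun y => g y a b) x)
            (fun a b => pd Y (fun y => g y a b) x)
            (fun a b => ginv_symm hU hgs hgsym hginv x hx a b)
      _ = ∑ Z, ∑ V, pd X (fun y => (g y)⁻¹ Z V) x * pd Y (fun y => g y Z V) x :=
          scongr fun Z => scongr fun V => by
            rw [dginv hU hgs hgsym hginv x hx X Z V]
  · exact scongr fun Z => scongr fun V => by rw [swap2 Z V]

end METRIC2



section HYPER
variable {n : ℕ} {U : Set (Fin n → ℝ)} (hU : IsOpen U)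
variable (J : Fin 3 → Fin n → Fin n → (Fin n → ℝ) → ℝ)
variable (hJs : ∀ α a b, ContDiffOn ℝ (⊤:ℕ∞) (J α a b) U)

lemma obata_symm : ∀ (A B C : Fin n) x, obata J A B C x = obata J B A C x := by
  intro A B C x
  unfold obata
  congr 1
  refine scongr fun α => scongr fun W => ?_
  have h : (∑ β, ∑ γ, epsLC α β γ *
        ((∑ u, J β A u x * pd u (J γ B W) x) + ∑ u, J β B u x * pd u (J γ A W) x))
      = ∑ β, ∑ γ, epsLC α β γ *
        ((∑ u, J β B u x * pd u (J γ A W) x) + ∑ u, J β A u x * pd u (J γ B W) x) :=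
    scongr fun β => scongr fun γ => by ring
  rw [h]
  ring

include hU hJs

lemma cdo_obata : ∀ A B C, ContDiffOn ℝ (⊤:ℕ∞) (obata J A B C) U := by
  intro A B C
  have h : obata J A B C = fun x => -(1/6 : ℝ) * ∑ α, ∑ W,
      ((pd A (J α B W) x + pd B (J α A W) x + (1/2:ℝ) * ∑ β, ∑ γ, epsLC α β γ *
        ((∑ u, J β A u x * pd u (J γ B W) x) + ∑ u, J β B u x * pd u (J γ A W) x))
        * J α W C x) := rfl
  rw [h]
  refine contDiffOn_const.mul (ContDiffOn.sum fun α _ => ContDiffOn.sum fun W _ =>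
    ContDiffOn.mul ?_ (hJs α W C))
  refine ContDiffOn.add (ContDiffOn.add (cdo_pd (hJs α B W) hU A)
    (cdo_pd (hJs α A W) hU B)) ?_
  refine contDiffOn_const.mul (ContDiffOn.sum fun β _ => ContDiffOn.sum fun γ _ =>
    contDiffOn_const.mul (ContDiffOn.add ?_ ?_))
  · exact ContDiffOn.sum fun u _ => (hJs β A u).mul (cdo_pd (hJs γ B W) hU u)
  · exact ContDiffOn.sum fun u _ => (hJs β B u).mul (cdo_pd (hJs γ A W) hU u)

lemma ricci_red (x : Fin n → ℝ) (hx : x ∈ U) (X Y : Fin n) :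
    obataRicci J X Y x - obataRicci J Y X x
    = pd Y (fun y => ∑ Z, obata J X Z Z y) x
      - pd X (fun y => ∑ Z, obata J Y Z Z y) x := by
  have hoD : ∀ (A B C : Fin n), DifferentiableAt ℝ (obata J A B C) x :=
    fun A B C => cdo_diffAt (cdo_obata hU J hJs A B C) hU hx
  have rep : ∀ X' Y' : Fin n, obataRicci J X' Y' x
      = ((∑ Z, pd Z (obata J X' Y' Z) x)
        - pd X' (fun y => ∑ Z, obata J Y' Z Z y) x)
        + ((∑ Z, ∑ V, obata J Z V Z x * obata J X' Y' V x)
        - ∑ Z, ∑ V, obata J X' V Z x * obata J Z Y' V x) := by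
    intro X' Y'
    simp only [obataRicci, curvOf]
    simp only [Finset.sum_add_distrib, Finset.sum_sub_distrib]
    have e2 : (∑ Z, pd X' (obata J Z Y' Z) x)
        = pd X' (fun y => ∑ Z, obata J Y' Z Z y) x := by
      calc (∑ Z, pd X' (obata J Z Y' Z) x)
          = ∑ Z, pd X' (obata J Y' Z Z) x :=
            scongr fun Z => by
              rw [show obata J Z Y' Z = obata J Y' Z Z from
                funext fun y => obata_symm J Z Y' Z y]
        _ = pd X' (fun y => ∑ Z, obata J Y' Z Z y) x :=
            (pd_sum (fun Z _ => hoD Y' Z Z) X').symm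
    rw [e2]
    ring
  rw [rep X Y, rep Y X]
  have h1 : (∑ Z, pd Z (obata J X Y Z) x) = ∑ Z, pd Z (obata J Y X Z) x :=
    scongr fun Z => by
      rw [show obata J X Y Z = obata J Y X Z from funext fun y => obata_symm J X Y Z y]
  have h3 : (∑ Z, ∑ V, obata J Z V Z x * obata J X Y V x)
      = ∑ Z, ∑ V, obata J Z V Z x * obata J Y X V x :=
    scongr fun Z => scongr fun V => by rw [obata_symm J X Y V x]
  have h4 : (∑ Z, ∑ V, obata J X V Z x * obata J Z Y V x)
      = ∑ Z, ∑ V, obata J Y V Z x * obata J Z X V x := by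
    calc (∑ Z, ∑ V, obata J X V Z x * obata J Z Y V x)
        = ∑ V, ∑ Z, obata J X V Z x * obata J Z Y V x := Finset.sum_comm
      _ = ∑ Z, ∑ V, obata J Y V Z x * obata J Z X V x :=
          scongr fun a => scongr fun b => by
            rw [obata_symm J X a b x, obata_symm J b Y a x]
            ring
  rw [h1, h3, h4]
  ring

end HYPER

section DVA
variable {n : ℕ} {U : Set (Fin n → ℝ)} (hU : IsOpen U)
variable (J : Fin 3 → Fin n → Fin n → (Fin n → ℝ) → ℝ)
variable (T : Fin n → Fin n → Fin n → (Fin n → ℝ) → ℝ)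
variable (hJs : ∀ α a b, ContDiffOn ℝ (⊤:ℕ∞) (J α a b) U)
variable (hTs : ∀ a b c, ContDiffOn ℝ (⊤:ℕ∞) (T a b c) U)

include hU hJs hTs

lemma cdo_VF : ∀ A, ContDiffOn ℝ (⊤:ℕ∞)
    (fun y => ∑ α, ∑ a, ∑ b, ∑ c, J α A a y * T a b c y * J α c b y) U :=
  fun A => ContDiffOn.sum fun α _ => ContDiffOn.sum fun a _ =>
    ContDiffOn.sum fun b _ => ContDiffOn.sum fun c _ =>
      ((hJs α A a).mul (hTs a b c)).mul (hJs α c b)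

lemma dV_analysis (x : Fin n → ℝ) (hx : x ∈ U)
    (Γv : Fin n → Fin n → Fin n → ℝ)
    (hDJ : ∀ A (α : Fin 3) B C, pd A (J α B C) x
      = (∑ V, Γv A B V * J α V C x) - ∑ V, Γv A V C * J α B V x)
    (hDT : ∀ A a b c, pd A (T a b c) x
      = ((∑ V, Γv A a V * T V b c x) + ∑ V, Γv A b V * T a V c x)
        - ∑ V, Γv A V c * T a b V x)
    (A B : Fin n) :
    pd A (fun y => ∑ α, ∑ a, ∑ b, ∑ c, J α B a y * T a b c y * J α c b y) x
    = ∑ W, Γv A B W * ∑ α, ∑ a, ∑ b, ∑ c, J α W a x * T a b c x * J α c b x := by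
  have hJD : ∀ α a b, DifferentiableAt ℝ (J α a b) x :=
    fun α a b => cdo_diffAt (hJs α a b) hU hx
  have hTD : ∀ a b c, DifferentiableAt ℝ (T a b c) x :=
    fun a b c => cdo_diffAt (hTs a b c) hU hx
  calc pd A (fun y => ∑ α, ∑ a, ∑ b, ∑ c, J α B a y * T a b c y * J α c b y) x
      = ∑ α, ∑ a, ∑ b, ∑ c, pd A (fun y => J α B a y * T a b c y * J α c b y) x := by
        rw [pd_sum (fun α _ => DifferentiableAt.fun_sum fun a _ =>
          DifferentiableAt.fun_sum fun b _ => DifferentiableAt.fun_sum fun c _ =>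
            ((hJD α B a).fun_mul (hTD a b c)).fun_mul (hJD α c b)) A]
        refine scongr fun α => ?_
        rw [pd_sum (fun a _ => DifferentiableAt.fun_sum fun b _ =>
          DifferentiableAt.fun_sum fun c _ =>
            ((hJD α B a).fun_mul (hTD a b c)).fun_mul (hJD α c b)) A]
        refine scongr fun a => ?_
        rw [pd_sum (fun b _ => DifferentiableAt.fun_sum fun c _ =>
            ((hJD α B a).fun_mul (hTD a b c)).fun_mul (hJD α c b)) A]
        refine scongr fun b => ?_
        rw [pd_sum (fun c _ => ((hJD α B a).fun_mul (hTD a b c)).fun_mul (hJD α c b)) A]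
    _ = ∑ α, ∑ a, ∑ b, ∑ c,
          (pd A (J α B a) x * T a b c x * J α c b x
          + J α B a x * pd A (T a b c) x * J α c b x
          + J α B a x * T a b c x * pd A (J α c b) x) := by
        refine scongr fun α => scongr fun a => scongr fun b => scongr fun c => ?_
        rw [pd_mul ((hJD α B a).fun_mul (hTD a b c)) (hJD α c b) A,
          pd_mul (hJD α B a) (hTD a b c) A]
        ring
    _ = ∑ W, Γv A B W * ∑ α, ∑ a, ∑ b, ∑ c, J α W a x * T a b c x * J α c b x :=
        dV_alg (fun α a b => J α a b x) Γv (fun a b c => T a b c x)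
          (fun A' α B' C' => pd A' (J α B' C') x)
          (fun A' a b c => pd A' (T a b c) x) hDJ hDT A B

end DVA

end AUX

/-- for a hypercomplex structure `J` (vanishing Nijenhuis tensor) on an
open `U ⊆ ℝ^{4r}` which is covariantly constant with respect to the torsionful connection
`Γ^+ = γ + T` of a metric `g`, with `T` antisymmetric, `𝔇^+`-covariantly constant and
traceless, the antisymmetric part of the Ricci tensor of the Obata connection is
`R_{[XY]} = (2/3) T_{XY}^Z V_Z` with `V_Z = Σ J^α_Z^W T_{WV}^U J^α_U^V`. -/
theorem stmt_19 (r : ℕ) (U : Set (Fin (4 * r) → ℝ)) (hU : IsOpen U)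
    (g : (Fin (4 * r) → ℝ) → Matrix (Fin (4 * r)) (Fin (4 * r)) ℝ)
    (hgsmooth : ∀ X Y, ContDiffOn ℝ (⊤ : ℕ∞) (fun y => g y X Y) U)
    (hgsym : ∀ X Y, ∀ x ∈ U, g x X Y = g x Y X)
    (hginv : ∀ x ∈ U, IsUnit (g x).det)
    (T : Fin (4 * r) → Fin (4 * r) → Fin (4 * r) → (Fin (4 * r) → ℝ) → ℝ)
    (hTsmooth : ∀ X Y Z, ContDiffOn ℝ (⊤ : ℕ∞) (T X Y Z) U)
    (hTanti : ∀ X Y Z, ∀ x ∈ U, T X Y Z x = - T Y X Z x)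
    (J : Fin 3 → Fin (4 * r) → Fin (4 * r) → (Fin (4 * r) → ℝ) → ℝ)
    (hJ : IsAlmostHypercomplexOn J U)
    (hN : ∀ X Y Z, ∀ x ∈ U, nijenhuis J X Y Z x = 0)
    -- `J` is covariantly constant with respect to `Γ⁺ = γ + T`:
    (hJcov : ∀ α X Y Z, ∀ x ∈ U,
      pd X (J α Y Z) x
        - (∑ W, (christoffel g X Y W x + T X Y W x) * J α W Z x)
        + (∑ W, (christoffel g X W Z x + T X W Z x) * J α Y W x) = 0)
    -- the torsion is covariantly constant with respect to `𝔇⁺`: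
    (hTcov : ∀ X Y Z W, ∀ x ∈ U,
      pd X (T Y Z W) x
        - (∑ V, (christoffel g X Y V x + T X Y V x) * T V Z W x)
        - (∑ V, (christoffel g X Z V x + T X Z V x) * T Y V W x)
        + (∑ V, (christoffel g X V W x + T X V W x) * T Y Z V x) = 0)
    -- the torsion is traceless:
    (hTtrace : ∀ X, ∀ x ∈ U, ∑ Z, T X Z Z x = 0) :
    ∀ X Y, ∀ x ∈ U,
      (1 / 2) * (obataRicci J X Y x - obataRicci J Y X x)
        = (2 / 3) * ∑ Z, T X Y Z x *
            (∑ α, ∑ W, ∑ V, ∑ u, J α Z W x * T W V u x * J α u V x) := by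
  obtain ⟨hJs, hQ⟩ := hJ
  intro X Y x hx
  have hDJ : ∀ y ∈ U, ∀ (A : Fin (4*r)) (α : Fin 3) (B C : Fin (4*r)),
      pd A (J α B C) y
      = (∑ V, (christoffel g A B V y + T A B V y) * J α V C y)
        - ∑ V, (christoffel g A V C y + T A V C y) * J α B V y := by
    intro y hy A α B C
    have h := hJcov α A B C y hy
    linarith
  have hDT : ∀ y ∈ U, ∀ A a b c : Fin (4*r), pd A (T a b c) y
      = ((∑ V, (christoffel g A a V y + T A a V y) * T V b c y)
        + ∑ V, (christoffel g A b V y + T A b V y) * T a V c y)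
        - ∑ V, (christoffel g A V c y + T A V c y) * T a b V y := by
    intro y hy A a b c
    have h := hTcov A a b c y hy
    linarith
  have hQy : ∀ y ∈ U, ∀ (α β : Fin 3) (a b : Fin (4*r)),
      ∑ W, J α a W y * J β W b y
      = (if α = β then (-1:ℝ) else 0) * (if a = b then 1 else 0)
        + ∑ γ, epsLC α β γ * J γ a b y := fun y hy α β a b => hQ α β a b y hy
  have hΓy : ∀ y ∈ U, ∀ a b c : Fin (4*r),
      (christoffel g a b c y + T a b c y) - (christoffel g b a c y + T b a c y)
      = 2 * T a b c y := by
    intro y hy a b c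
    have h1 := christoffel_symm hU hgsmooth hgsym hginv y hy a b c
    have h2 := hTanti b a c y hy
    linarith
  have hTy : ∀ y ∈ U, ∀ a b c : Fin (4*r), T a b c y = -T b a c y :=
    fun y hy a b c => hTanti a b c y hy
  have hEq : ∀ X' : Fin (4*r), ∀ y ∈ U, (∑ Z, obata J X' Z Z y)
      = (∑ Z, christoffel g X' Z Z y)
        - (2/3) * ∑ α, ∑ a, ∑ b, ∑ c, J α X' a y * T a b c y * J α c b y := by
    intro X' y hy
    have halg := obata_trace_alg (fun α a b => J α a b y)
      (fun a b c => christoffel g a b c y + T a b c y)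
      (fun a b c => T a b c y)
      (fun A α B C => pd A (J α B C) y)
      (hDJ y hy) (hQy y hy) (hΓy y hy) (hTy y hy) X'
    have hR : (∑ Z, (christoffel g Z X' Z y + T Z X' Z y))
        = ∑ Z, christoffel g X' Z Z y := by
      rw [Finset.sum_add_distrib]
      have hA : (∑ Z, christoffel g Z X' Z y) = ∑ Z, christoffel g X' Z Z y :=
        scongr fun Z => christoffel_symm hU hgsmooth hgsym hginv y hy Z X' Z
      have hB : (∑ Z, T Z X' Z y) = 0 := by
        have h1 : (∑ Z, T Z X' Z y) = ∑ Z, -(T X' Z Z y) :=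
          scongr fun Z => hTanti Z X' Z y hy
        rw [h1, Finset.sum_neg_distrib, hTtrace X' y hy, neg_zero]
      rw [hA, hB, add_zero]
    calc (∑ Z, obata J X' Z Z y)
        = (∑ Z, (christoffel g Z X' Z y + T Z X' Z y))
          - (2/3) * ∑ α, ∑ a, ∑ b, ∑ c, J α X' a y * T a b c y * J α c b y := halg
      _ = _ := by rw [hR]
  have hchrD : ∀ A B C : Fin (4*r), DifferentiableAt ℝ (christoffel g A B C) x :=
    fun A B C => cdo_diffAt (cdo_chr hU hgsmooth hgsym hginv A B C) hU hx
  have hCXD : ∀ X' : Fin (4*r),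
      DifferentiableAt ℝ (fun y => ∑ Z, christoffel g X' Z Z y) x :=
    fun X' => DifferentiableAt.fun_sum fun Z _ => hchrD X' Z Z
  have hVFD : ∀ A : Fin (4*r), DifferentiableAt ℝ
      (fun y => ∑ α, ∑ a, ∑ b, ∑ c, J α A a y * T a b c y * J α c b y) x :=
    fun A => cdo_diffAt (cdo_VF hU J T hJs hTsmooth A) hU hx
  have hpd : ∀ X' Y' : Fin (4*r), pd Y' (fun y => ∑ Z, obata J X' Z Z y) x
      = pd Y' (fun y => ∑ Z, christoffel g X' Z Z y) x
        - (2/3) * pd Y' (fun y => ∑ α, ∑ a, ∑ b, ∑ c,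
            J α X' a y * T a b c y * J α c b y) x := by
    intro X' Y'
    have e1 : pd Y' (fun y => ∑ Z, obata J X' Z Z y) x
        = pd Y' (fun y => (∑ Z, christoffel g X' Z Z y)
          - (2/3) * ∑ α, ∑ a, ∑ b, ∑ c, J α X' a y * T a b c y * J α c b y) x :=
      pd_congr hU hx (fun y hy => hEq X' y hy) Y'
    rw [e1, pd_sub (hCXD X') (DifferentiableAt.const_mul (hVFD X') _) Y',
      pd_const_mul (hVFD X') _ Y']
  have hdV : ∀ A B : Fin (4*r), pd A (fun y => ∑ α, ∑ a, ∑ b, ∑ c,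
        J α B a y * T a b c y * J α c b y) x
      = ∑ W, (christoffel g A B W x + T A B W x)
          * ∑ α, ∑ a, ∑ b, ∑ c, J α W a x * T a b c x * J α c b x :=
    fun A B => dV_analysis hU J T hJs hTsmooth x hx
      (fun a b c => christoffel g a b c x + T a b c x) (hDJ x hx) (hDT x hx) A B
  have hclosed := closed hU hgsmooth hgsym hginv x hx X Y
  have hfin : (∑ W, (christoffel g X Y W x + T X Y W x)
        * ∑ α, ∑ a, ∑ b, ∑ c, J α W a x * T a b c x * J α c b x)
      - (∑ W, (christoffel g Y X W x + T Y X W x)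
        * ∑ α, ∑ a, ∑ b, ∑ c, J α W a x * T a b c x * J α c b x)
      = 2 * ∑ Z, T X Y Z x
          * ∑ α, ∑ a, ∑ b, ∑ c, J α Z a x * T a b c x * J α c b x := by
    rw [← Finset.sum_sub_distrib]
    rw [Finset.mul_sum]
    refine scongr fun W => ?_
    have h1 := christoffel_symm hU hgsmooth hgsym hginv x hx X Y W
    have h2 := hTanti Y X W x hx
    linear_combination (∑ α, ∑ a, ∑ b, ∑ c, J α W a x * T a b c x * J α c b x) * h1
      - (∑ α, ∑ a, ∑ b, ∑ c, J α W a x * T a b c x * J α c b x) * h2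
  rw [ricci_red hU J hJs x hx X Y, hpd X Y, hpd Y X, hdV Y X, hdV X Y, hclosed]
  linear_combination (1/3) * hfin
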